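/- arXiv:1206.5397 — 7 statements merged into one kernel-verified Lean document; each statement's English description precedes it below -/
import Mathlib

section
/- Let A be a maximal (under set inclusion) connected non-dominating set in a non-complete graph G. Then every vertex in V(G) \ N_G[A] is adjacent to every vertex in N_G(A). -/
open SimpleGraph

variable {V : Type*}

/-- Open neighbourhood of a set of vertices. -/
def setNbhd (G : SimpleGraph V) (A : Set V) : Set V :=
  {x | x ∉ A ∧ ∃ a ∈ A, G.Adj a x}

/-- Closed neighbourhood of a set of vertices. -/
def closedNbhd (G : SimpleGraph V) (A : Set V) : Set V :=
  A ∪ setNbhd G A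

/-- `A` is a connected non-dominating set: `G[A]` is connected and `N[A] ⊊ V`. -/
def ConnNonDom (G : SimpleGraph V) (A : Set V) : Prop :=
  (G.induce A).Connected ∧ closedNbhd G A ≠ Set.univ

/-- `A` is a maximal connected non-dominating set. -/
def MaxConnNonDom (G : SimpleGraph V) (A : Set V) : Prop :=
  ConnNonDom G A ∧ ∀ A' : Set V, A ⊆ A' → ConnNonDom G A' → A' = A

/-- `G` is not complete. -/
def NonComplete (G : SimpleGraph V) : Prop :=
  ∃ u v : V, u ≠ v ∧ ¬ G.Adj u v

/-- A chordless (induced) path. -/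
def IsInducedPath (G : SimpleGraph V) {x y : V} (p : G.Walk x y) : Prop :=
  p.IsPath ∧ ∀ u w : V, u ∈ p.support → w ∈ p.support → G.Adj u w → s(u, w) ∈ p.edges

/-- A chordless (induced) cycle. -/
def IsInducedCycle (G : SimpleGraph V) {v : V} (c : G.Walk v v) : Prop :=
  c.IsCycle ∧ ∀ u w : V, u ∈ c.support → w ∈ c.support → G.Adj u w → s(u, w) ∈ c.edges

/-- `G` is `k`-chordal: no induced cycle of length greater than `k`. -/
def KChordal (G : SimpleGraph V) (k : ℕ) : Prop :=
  ∀ ⦃v : V⦄ (c : G.Walk v v), IsInducedCycle G c → c.length ≤ k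

/-- `u` is an internal vertex of the path `p`. -/
def InternalVert (G : SimpleGraph V) {x y : V} (p : G.Walk x y) (u : V) : Prop :=
  u ∈ p.support ∧ u ≠ x ∧ u ≠ y

/-- Condition (C1): any two distinct neighbours of `v` are at distance at most `k-2`
in `G - v`. -/
def SimpC1 (G : SimpleGraph V) (k : ℕ) (v : V) : Prop :=
  ∀ x y : V, G.Adj v x → G.Adj v y → x ≠ y →
    ∃ (hx : x ≠ v) (hy : y ≠ v)
      (p : (G.induce {u : V | u ≠ v}).Walk ⟨x, hx⟩ ⟨y, hy⟩), p.length ≤ k - 2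

/-- Condition (C2): every induced path between non-adjacent neighbours of `v` whose
internal vertices avoid `N[v]` has at most `k-2` edges. -/
def SimpC2 (G : SimpleGraph V) (k : ℕ) (v : V) : Prop :=
  ∀ x y : V, G.Adj v x → G.Adj v y → ¬ G.Adj x y → x ≠ y →
    ∀ p : G.Walk x y, IsInducedPath G p →
      (∀ u : V, InternalVert G p u → u ≠ v ∧ ¬ G.Adj v u) →
      p.length ≤ k - 2

/-- `v` is `k`-simplicial in `G`. -/
def KSimplicial (G : SimpleGraph V) (k : ℕ) (v : V) : Prop :=
  SimpC1 G k v ∧ SimpC2 G k v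

/-- Vertices at position `≥ i` in the ordering `σ`. -/
def laterSet {V : Type*} [Fintype V] (σ : Fin (Fintype.card V) ≃ V)
    (i : Fin (Fintype.card V)) : Set V := {w | i ≤ σ.symm w}

/-- `σ` is a `k`-simplicial ordering of the vertices of `G`. -/
def KSimplicialOrdering {V : Type*} [Fintype V] (G : SimpleGraph V) (k : ℕ)
    (σ : Fin (Fintype.card V) ≃ V) : Prop :=
  ∀ i : Fin (Fintype.card V),
    KSimplicial (G.induce (laterSet σ i)) k ⟨σ i, by simp [laterSet]⟩

/-- `S` separates `a` from `b`. -/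
def IsSeparator (G : SimpleGraph V) (a b : V) (S : Set V) : Prop :=
  a ∉ S ∧ b ∉ S ∧ ∀ p : G.Walk a b, ∃ s ∈ S, s ∈ p.support

/-- `S` is a minimal `(a,b)`-vertex separator. -/
def IsMinSeparator (G : SimpleGraph V) (a b : V) (S : Set V) : Prop :=
  IsSeparator G a b S ∧ ∀ T : Set V, T ⊂ S → ¬ IsSeparator G a b T

/-- `S` is a minimal vertex separator of `G`. -/
def IsMinVertexSeparator (G : SimpleGraph V) (S : Set V) : Prop :=
  ∃ a b : V, a ≠ b ∧ ¬ G.Adj a b ∧ IsMinSeparator G a b S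

/-- `u` lies in the connected component `c` of `G - S`. -/
def InComponent (G : SimpleGraph V) (S : Set V)
    (c : (G.induce Sᶜ).ConnectedComponent) (u : V) : Prop :=
  ∃ h : u ∈ Sᶜ, (G.induce Sᶜ).connectedComponentMk ⟨u, h⟩ = c

/-- `v` is 3-simplicial: its neighbourhood is a clique. -/
def Simplicial3 (G : SimpleGraph V) (v : V) : Prop :=
  ∀ x y : V, G.Adj v x → G.Adj v y → x ≠ y → G.Adj x y

lemma aux_insert_connected (G : SimpleGraph V) {A : Set V}
    (hA : (G.induce A).Connected) {w a : V} (haA : a ∈ A) (haw : G.Adj a w) :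
    (G.induce (insert w A)).Connected := by
  have hsub : A ⊆ insert w A := Set.subset_insert w A
  let φ : G.induce A →g G.induce (insert w A) :=
    ⟨fun v => ⟨v.1, hsub v.2⟩, fun h => h⟩
  have key : ∀ x : ((insert w A : Set V) : Type _), (G.induce (insert w A)).Reachable x
      ⟨a, hsub haA⟩ := by
    rintro ⟨x, hx | hx⟩
    · exact SimpleGraph.Adj.reachable (by simpa [hx] using haw.symm :
        (G.induce (insert w A)).Adj ⟨x, Or.inl hx⟩ ⟨a, hsub haA⟩)
    · exact (hA.preconnected ⟨x, hx⟩ ⟨a, haA⟩).map φ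
  constructor
  intro x y
  exact (key x).trans (key y).symm

theorem stmt1 (G : SimpleGraph V) (hnc : NonComplete G) (A : Set V)
    (hA : MaxConnNonDom G A) :
    ∀ b ∉ closedNbhd G A, ∀ w ∈ setNbhd G A, G.Adj b w := by
  intro b hb w hw
  obtain ⟨hwA, a, haA, haw⟩ := hw
  -- consider A' = insert w A
  have hconn' : (G.induce (insert w A)).Connected :=
    aux_insert_connected G hA.1.1 haA haw
  have hne : insert w A ≠ A := fun h => hwA (h ▸ Set.mem_insert w A)
  have hdom : closedNbhd G (insert w A) = Set.univ := by
    by_contra h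
    exact hne (hA.2 _ (Set.subset_insert w A) ⟨hconn', h⟩)
  have hbmem : b ∈ closedNbhd G (insert w A) := hdom ▸ Set.mem_univ b
  have hbA : b ∉ A := fun h => hb (Or.inl h)
  have hbN : b ∉ setNbhd G A := fun h => hb (Or.inr h)
  rcases hbmem with h | ⟨_, a', ha', hadj⟩
  · rcases h with h | h
    · subst h; exact absurd ⟨hwA, a, haA, haw⟩ hbN
    · exact absurd h hbA
  · rcases ha' with h | h
    · subst h; exact hadj.symm
    · exact absurd ⟨hbA, a', h, hadj⟩ hbN
end

section
/- If A is a maximal connected non-dominating set in a non-complete graph G, then the set B = V(G) \ N_G[A] is nonempty, and moreover for any x ∈ N_G(A) and b, b' ∈ B, b and b' are each adjacent to x. -/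
open SimpleGraph

variable {V : Type*}

theorem stmt2 (G : SimpleGraph V) (hnc : NonComplete G) (A : Set V)
    (hA : MaxConnNonDom G A) :
    ((closedNbhd G A)ᶜ).Nonempty ∧
      ∀ x ∈ setNbhd G A, ∀ b ∈ (closedNbhd G A)ᶜ, ∀ b' ∈ (closedNbhd G A)ᶜ,
        G.Adj b x ∧ G.Adj b' x := by
  obtain ⟨hcnd, hmax⟩ := hA
  obtain ⟨hconn, hne⟩ := hcnd
  have hB : ((closedNbhd G A)ᶜ).Nonempty := by
    rw [Set.nonempty_compl]
    exact hne
  refine ⟨hB, ?_⟩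
  -- key lemma: any b ∉ N[A] is adjacent to any x ∈ N(A)
  have key : ∀ x ∈ setNbhd G A, ∀ b ∈ (closedNbhd G A)ᶜ, G.Adj b x := by
    intro x hx b hb
    obtain ⟨hxA, a, haA, hax⟩ := hx
    -- A ∪ {x} is connected
    have hsing : (G.induce ({x} : Set V)).Connected := by
      haveI : Nonempty ({x} : Set V) := ⟨⟨x, rfl⟩⟩
      constructor
      · rintro ⟨u, hu⟩ ⟨v, hv⟩
        simp only [Set.mem_singleton_iff] at hu hv
        subst hu; subst hv
        exact Reachable.refl _
    have hconn' : (G.induce (A ∪ {x})).Connected :=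
      connected_induce_union hconn.preconnected hsing.preconnected haA rfl hax
    have hne' : A ∪ {x} ≠ A := by
      intro h
      exact hxA (h ▸ (Set.mem_union_right A rfl : x ∈ A ∪ {x}))
    have hdom : closedNbhd G (A ∪ {x}) = Set.univ := by
      by_contra h
      exact hne' (hmax _ Set.subset_union_left ⟨hconn', h⟩)
    have hbmem : b ∈ closedNbhd G (A ∪ {x}) := hdom ▸ Set.mem_univ b
    simp only [closedNbhd, Set.mem_compl_iff, Set.mem_union, not_or] at hb
    obtain ⟨hbA, hbN⟩ := hb
    rcases hbmem with hb1 | hb2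
    · rcases hb1 with h | h
      · exact absurd h hbA
      · rw [Set.mem_singleton_iff] at h
        subst h
        exact absurd ⟨hbA, a, haA, hax⟩ hbN
    · obtain ⟨_, a', ha', hadj⟩ := hb2
      rcases ha' with h | h
      · exact absurd ⟨hbA, a', h, hadj⟩ hbN
      · rw [Set.mem_singleton_iff] at h
        subst h
        exact hadj.symm
  intro x hx b hb b' hb'
  exact ⟨key x hx b hb, key x hx b' hb'⟩
end

section
/- Let k ≥ 3 and let G be a non-complete k-chordal graph. If A is a maximal connected non-dominating set in G, then there exists a vertex in V(G) \ N_G[A] that is k-simplicial in G. -/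
open SimpleGraph

variable {V : Type*}

section Aux

variable {W : Type*}

lemma chord_head {H : SimpleGraph W} {x y w : W} (p : H.Walk x y)
    (hxw : H.Adj x w) (hw : w ∈ p.support) (hne : s(x, w) ∉ p.edges) :
    ∃ q : H.Walk x y, q.length < p.length := by
  classical
  cases p with
  | nil =>
    simp only [Walk.support_nil, List.mem_singleton] at hw
    subst hw
    exact absurd hxw (H.irrefl)
  | @cons _ z _ h rest =>
    rw [Walk.support_cons, List.mem_cons] at hw
    rcases hw with rfl | hwr
    · exact absurd hxw (H.irrefl)
    · refine ⟨Walk.cons hxw (rest.dropUntil w hwr), ?_⟩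
      have hsplit := congrArg Walk.length (rest.take_spec hwr)
      rw [Walk.length_append] at hsplit
      have htu : (rest.takeUntil w hwr).length ≠ 0 := by
        intro h0
        have hzw : z = w := Walk.eq_of_length_eq_zero h0
        subst hzw
        exact hne (by simp)
      simp only [Walk.length_cons]
      omega

lemma chord_shorten {H : SimpleGraph W} {x y : W} (p : H.Walk x y) :
    ∀ u w, H.Adj u w → u ∈ p.support → w ∈ p.support → s(u, w) ∉ p.edges →
    ∃ q : H.Walk x y, q.length < p.length := by
  induction p with
  | nil =>
    intro u w hadj hu hw _
    simp only [Walk.support_nil, List.mem_singleton] at hu hw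
    subst hu; subst hw
    exact absurd hadj (H.irrefl)
  | @cons a z _ h rest ih =>
    intro u w hadj hu hw he
    by_cases hux : u = a
    · subst hux
      exact chord_head _ hadj hw he
    · by_cases hwx : w = a
      · subst hwx
        exact chord_head (Walk.cons h rest) hadj.symm hu (by rwa [Sym2.eq_swap])
      · rw [Walk.support_cons, List.mem_cons] at hu hw
        rcases hu with rfl | hu
        · exact absurd rfl hux
        rcases hw with rfl | hw
        · exact absurd rfl hwx
        obtain ⟨q, hq⟩ := ih u w hadj hu hw
          (fun hmem => he (by rw [Walk.edges_cons]; exact List.mem_cons_of_mem _ hmem))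
        exact ⟨Walk.cons h q, by simp only [Walk.length_cons]; omega⟩

lemma exists_induced_path {H : SimpleGraph W} {x y : W} (hr : H.Reachable x y) :
    ∃ p : H.Walk x y, p.IsPath ∧
      ∀ u w, u ∈ p.support → w ∈ p.support → H.Adj u w → s(u, w) ∈ p.edges := by
  classical
  obtain ⟨w0⟩ := hr
  set S : Set ℕ := {n | ∃ p : H.Walk x y, p.IsPath ∧ p.length = n} with hS
  have hSne : S.Nonempty := ⟨w0.bypass.length, w0.bypass, w0.bypass_isPath, rfl⟩
  obtain ⟨p, hp, hplen⟩ := Nat.sInf_mem hSne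
  refine ⟨p, hp, ?_⟩
  by_contra hcon
  push_neg at hcon
  obtain ⟨u, w, hu, hw, hadj, hne⟩ := hcon
  obtain ⟨q, hq⟩ := chord_shorten p u w hadj hu hw hne
  have hmem : q.bypass.length ∈ S := ⟨q.bypass, q.bypass_isPath, rfl⟩
  have hle := Nat.sInf_le hmem
  have := q.length_bypass_le
  omega

end Aux

lemma close_cycle {G : SimpleGraph V} {k : ℕ} (hch : KChordal G k) {b x y : V}
    (hbx : G.Adj b x) (hby : G.Adj b y) (hxy : ¬ G.Adj x y) (hxyne : x ≠ y)
    (p : G.Walk x y) (hp : p.IsPath)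
    (hind : ∀ u w, u ∈ p.support → w ∈ p.support → G.Adj u w → s(u, w) ∈ p.edges)
    (hbint : ∀ u ∈ p.support, u ≠ x → u ≠ y → ¬ G.Adj b u)
    (hbsup : b ∉ p.support) : p.length ≤ k - 2 := by
  have hyb : G.Adj y b := hby.symm
  set c : G.Walk b b := Walk.cons hbx (p.concat hyb) with hc
  have hcsup : (p.concat hyb).support = p.support.concat b := by
    rw [Walk.support_concat, List.concat_eq_append]
  have hpath : (p.concat hyb).IsPath := by
    rw [Walk.isPath_def, hcsup, List.concat_eq_append]
    rw [List.nodup_append]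
    refine ⟨hp.support_nodup, List.nodup_singleton b, ?_⟩
    intro a ha _ hb' hab
    rw [List.mem_singleton] at hb'
    subst hb'
    exact hbsup (hab ▸ ha)
  have hcyc : c.IsCycle := by
    rw [hc, Walk.cons_isCycle_iff]
    refine ⟨hpath, ?_⟩
    intro hmem
    rw [Walk.edges_concat, List.concat_eq_append, List.mem_append] at hmem
    rcases hmem with hmem | hmem
    · exact hbsup (p.fst_mem_support_of_mem_edges hmem)
    · rw [List.mem_singleton, Sym2.eq_iff] at hmem
      rcases hmem with ⟨h1, _⟩ | ⟨_, h2⟩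
      · exact hby.ne h1
      · exact hxyne h2
  have hchords : ∀ u w : V, u ∈ c.support → w ∈ c.support → G.Adj u w → s(u, w) ∈ c.edges := by
    have hce : c.edges = s(b, x) :: (p.edges ++ [s(y, b)]) := by
      rw [hc, Walk.edges_cons, Walk.edges_concat, List.concat_eq_append]
    have hcs : ∀ u, u ∈ c.support → u = b ∨ u ∈ p.support := by
      intro u hu
      rw [hc, Walk.support_cons, List.mem_cons, hcsup, List.concat_eq_append,
        List.mem_append, List.mem_singleton] at hu
      tauto
    intro u w hu hw hadj
    rcases hcs u hu with rfl | hu' <;> rcases hcs w hw with rfl | hw'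
    · exact absurd hadj (G.irrefl)
    · by_cases hwx : w = x
      · subst hwx; rw [hce]; exact List.mem_cons_self
      by_cases hwy : w = y
      · subst hwy
        rw [hce]
        refine List.mem_cons_of_mem _ (List.mem_append.2 (Or.inr ?_))
        rw [List.mem_singleton, Sym2.eq_swap]
      · exact absurd hadj (hbint w hw' hwx hwy)
    · by_cases hux : u = x
      · subst hux
        rw [hce, Sym2.eq_swap]
        exact List.mem_cons_self
      by_cases huy : u = y
      · subst huy
        rw [hce]
        exact List.mem_cons_of_mem _ (List.mem_append.2 (Or.inr (List.mem_singleton.2 rfl)))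
      · exact absurd hadj.symm (hbint u hu' hux huy)
    · rw [hce]
      exact List.mem_cons_of_mem _ (List.mem_append.2 (Or.inl (hind u w hu' hw' hadj)))
  have hlen := hch c ⟨hcyc, hchords⟩
  rw [hc, Walk.length_cons, Walk.length_concat] at hlen
  omega

lemma simpC2_all {G : SimpleGraph V} {k : ℕ} (hch : KChordal G k) (v : V) :
    SimpC2 G k v := by
  intro x y hvx hvy hxy hne p hip hint
  refine close_cycle hch hvx hvy hxy hne p hip.1 hip.2 ?_ ?_
  · intro u hu hux huy
    exact (hint u ⟨hu, hux, huy⟩).2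
  · intro hv
    by_cases hvx' : v = x
    · subst hvx'; exact G.irrefl hvx
    by_cases hvy' : v = y
    · subst hvy'; exact G.irrefl hvy
    · exact (hint v ⟨hv, hvx', hvy'⟩).1 rfl

lemma kchordal_induce {G : SimpleGraph V} {k : ℕ} (hch : KChordal G k) (s : Set V) :
    KChordal (G.induce s) k := by
  intro v c hc
  let f : G.induce s →g G := (SimpleGraph.Embedding.induce s).toHom
  have hinj : Function.Injective f := Subtype.val_injective
  have hcyc : (c.map f).IsCycle := hc.1.map hinj
  have hchords : ∀ u w : V, u ∈ (c.map f).support → w ∈ (c.map f).support →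
      G.Adj u w → s(u, w) ∈ (c.map f).edges := by
    intro u w hu hw hadj
    rw [Walk.support_map, List.mem_map] at hu hw
    obtain ⟨u', hu', rfl⟩ := hu
    obtain ⟨w', hw', rfl⟩ := hw
    have hadj' : (G.induce s).Adj u' w' := hadj
    have := hc.2 u' w' hu' hw' hadj'
    rw [Walk.edges_map]
    exact List.mem_map.2 ⟨s(u', w'), this, by simp [f]⟩
  have := hch (c.map f) ⟨hcyc, hchords⟩
  rwa [Walk.length_map] at this

lemma connected_insert {G : SimpleGraph V} {A : Set V} (hA : (G.induce A).Connected)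
    {a s : V} (ha : a ∈ A) (hadj : G.Adj a s) :
    (G.induce (insert s A)).Connected := by
  rw [SimpleGraph.connected_iff]
  constructor
  · have key : ∀ w : ↥(insert s A),
        (G.induce (insert s A)).Reachable w ⟨a, Set.mem_insert_of_mem _ ha⟩ := by
      rintro ⟨w, hw⟩
      rcases Set.mem_insert_iff.mp hw with rfl | hwA
      · exact Adj.reachable (by exact hadj.symm)
      · have hr : (G.induce A).Reachable ⟨w, hwA⟩ ⟨a, ha⟩ := hA.preconnected _ _
        exact hr.map (SimpleGraph.induceHomOfLE G (Set.subset_insert s A)).toHom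
    intro u v
    exact (key u).trans (key v).symm
  · exact ⟨⟨s, Set.mem_insert _ _⟩⟩

lemma exists_max_cnd [Finite V] (G : SimpleGraph V) {A₀ : Set V} (h₀ : ConnNonDom G A₀) :
    ∃ A, A₀ ⊆ A ∧ MaxConnNonDom G A := by
  let S : Set (Set V) := {A | A₀ ⊆ A ∧ ConnNonDom G A}
  have hfin : S.Finite := Set.toFinite S
  obtain ⟨A, hAS, hmax⟩ := Set.Finite.exists_maximalFor Set.ncard S hfin ⟨A₀, subset_rfl, h₀⟩
  refine ⟨A, hAS.1, hAS.2, ?_⟩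
  intro A' hsub hcnd
  have hA'S : A' ∈ S := ⟨hAS.1.trans hsub, hcnd⟩
  have hle : A.ncard ≤ A'.ncard := Set.ncard_le_ncard hsub (Set.toFinite A')
  have heq := hmax hA'S hle
  exact (Set.eq_of_subset_of_ncard_le hsub heq.ge (Set.toFinite A')).symm

lemma core_lemma {G : SimpleGraph V} {k : ℕ} (hk : 3 ≤ k) (hch : KChordal G k)
    {A : Set V} (hA : MaxConnNonDom G A) {b : V} (hb : b ∈ (closedNbhd G A)ᶜ)
    (hbsimp : KSimplicial (G.induce ((closedNbhd G A)ᶜ)) k ⟨b, hb⟩) :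
    KSimplicial G k b := by
  set Bc : Set V := (closedNbhd G A)ᶜ with hBc
  have hbA : b ∉ A := fun h => hb (Or.inl h)
  -- no neighbours of B-vertices in A
  have fnA : ∀ u, u ∈ Bc → ∀ a ∈ A, ¬ G.Adj a u := by
    intro u hu a ha hadj
    by_cases huA : u ∈ A
    · exact hu (Or.inl huA)
    · exact hu (Or.inr ⟨huA, a, ha, hadj⟩)
  -- every vertex of setNbhd is adjacent to every vertex of Bc
  have f2 : ∀ s ∈ setNbhd G A, ∀ u ∈ Bc, G.Adj s u := by
    rintro s ⟨hsA, a, haA, has⟩ u hu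
    have hconn : (G.induce (insert s A)).Connected :=
      connected_insert hA.1.1 haA has
    have hne : insert s A ≠ A := by
      intro h
      exact hsA (h ▸ Set.mem_insert s A)
    have hdom : closedNbhd G (insert s A) = Set.univ := by
      by_contra hd
      exact hne (hA.2 _ (Set.subset_insert s A) ⟨hconn, hd⟩)
    have hus : u ≠ s := by
      intro h
      exact hu (Or.inr (h ▸ ⟨hsA, a, haA, has⟩))
    have humem : u ∈ closedNbhd G (insert s A) := hdom ▸ Set.mem_univ u
    rcases humem with huA' | ⟨hunA', a', ha', hadj'⟩
    · rcases Set.mem_insert_iff.mp huA' with rfl | huA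
      · exact absurd rfl hus
      · exact absurd (Or.inl huA) hu
    · rcases Set.mem_insert_iff.mp ha' with rfl | haA'
      · exact hadj'
      · exact absurd hadj' (fnA u hu a' haA')
  -- classification of neighbours of b
  have f3 : ∀ x, G.Adj b x → x ∈ setNbhd G A ∨ x ∈ Bc := by
    intro x hxadj
    by_cases hx : x ∈ closedNbhd G A
    · rcases hx with hxA | hxS
      · exact absurd hxadj.symm (fnA b hb x hxA)
      · exact Or.inl hxS
    · exact Or.inr hx
  constructor
  · -- C1
    intro x y hbx hby hxyne
    have hxb : x ≠ b := hbx.ne'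
    have hyb : y ≠ b := hby.ne'
    refine ⟨hxb, hyb, ?_⟩
    by_cases hadj : G.Adj x y
    · exact ⟨Walk.cons (show (G.induce {u : V | u ≠ b}).Adj ⟨x, hxb⟩ ⟨y, hyb⟩ from hadj)
        Walk.nil, by simp only [Walk.length_cons, Walk.length_nil]; omega⟩
    · rcases f3 x hbx with hxS | hxB <;> rcases f3 y hby with hyS | hyB
      · -- both in setNbhd: path through A
        obtain ⟨hyA', ay, hay, hayadj⟩ := hyS
        obtain ⟨hxA', ax, hax, haxadj⟩ := hxS
        have hconn1 : (G.induce (insert y A)).Connected :=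
          connected_insert hA.1.1 hay hayadj
        have hconn : (G.induce (insert x (insert y A))).Connected :=
          connected_insert hconn1 (Set.mem_insert_of_mem _ hax) haxadj
        set s : Set V := insert x (insert y A) with hs
        have hxs : x ∈ s := Set.mem_insert _ _
        have hys : y ∈ s := Set.mem_insert_of_mem _ (Set.mem_insert _ _)
        obtain ⟨q, hqp, hqind⟩ :=
          exists_induced_path (hconn.preconnected ⟨x, hxs⟩ ⟨y, hys⟩)
        have hsb : ∀ u ∈ s, u ≠ b := by
          intro u hu
          rcases Set.mem_insert_iff.mp hu with rfl | hu
          · exact hxb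
          rcases Set.mem_insert_iff.mp hu with rfl | hu
          · exact hyb
          · exact fun h => hbA (h ▸ hu)
        let f : G.induce s →g G := (SimpleGraph.Embedding.induce s).toHom
        set p : G.Walk x y := q.map f with hpdef
        have hpp : p.IsPath := Walk.map_isPath_of_injective Subtype.val_injective hqp
        have hsup : ∀ u, u ∈ p.support → u ∈ s := by
          intro u hu
          replace hu : u ∈ (q.map f).support := hu
          rw [Walk.support_map, List.mem_map] at hu
          obtain ⟨⟨u, hu'⟩, _, rfl⟩ := hu
          exact hu'
        have hind : ∀ u w, u ∈ p.support → w ∈ p.support → G.Adj u w →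
            s(u, w) ∈ p.edges := by
          intro u w hu hw huw
          replace hu : u ∈ (q.map f).support := hu
          replace hw : w ∈ (q.map f).support := hw
          rw [Walk.support_map, List.mem_map] at hu hw
          obtain ⟨u', hu', rfl⟩ := hu
          obtain ⟨w', hw', rfl⟩ := hw
          have := hqind u' w' hu' hw' (show (G.induce s).Adj u' w' from huw)
          show _ ∈ (q.map f).edges
          rw [Walk.edges_map]
          exact List.mem_map.2 ⟨s(u', w'), this, by simp [f]⟩
        have hbint : ∀ u ∈ p.support, u ≠ x → u ≠ y → ¬ G.Adj b u := by
          intro u hu hux huy hadj'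
          have hus : u ∈ s := hsup u hu
          rcases Set.mem_insert_iff.mp hus with rfl | hus
          · exact hux rfl
          rcases Set.mem_insert_iff.mp hus with rfl | hus
          · exact huy rfl
          · exact hb (Or.inr ⟨hbA, u, hus, hadj'.symm⟩)
        have hbns : b ∉ p.support := fun h => hsb b (hsup b h) rfl
        have hlen : p.length ≤ k - 2 :=
          close_cycle hch hbx hby hadj hxyne p hpp hind hbint hbns
        have hsub : s ≤ {u : V | u ≠ b} := fun u hu => hsb u hu
        refine ⟨q.map (SimpleGraph.induceHomOfLE G hsub).toHom, ?_⟩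
        show (q.map (SimpleGraph.induceHomOfLE G hsub).toHom).length ≤ k - 2
        rw [Walk.length_map]
        have hlen' : (q.map f).length ≤ k - 2 := hlen
        rw [Walk.length_map] at hlen'
        exact hlen'
      · exact absurd (f2 x hxS y hyB) hadj
      · exact absurd (f2 y hyS x hxB).symm hadj
      · -- both in Bc: use simpliciality of b in the induced graph
        have h1 : (G.induce Bc).Adj ⟨b, hb⟩ ⟨x, hxB⟩ := hbx
        have h2 : (G.induce Bc).Adj ⟨b, hb⟩ ⟨y, hyB⟩ := hby
        have hne' : (⟨x, hxB⟩ : ↥Bc) ≠ ⟨y, hyB⟩ :=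
          fun h => hxyne (congrArg Subtype.val h)
        obtain ⟨hx', hy', q, hqlen⟩ := hbsimp.1 _ _ h1 h2 hne'
        let g : (G.induce Bc).induce {u : ↥Bc | u ≠ ⟨b, hb⟩} →g G.induce {u : V | u ≠ b} :=
          ⟨fun a => ⟨a.1.1, fun h => a.2 (Subtype.ext h)⟩, fun {a c} h => h⟩
        exact ⟨q.map g, by rw [Walk.length_map]; exact hqlen⟩
  · exact simpC2_all hch b
theorem simp_exists : ∀ (n : ℕ) {W : Type*} [Finite W] (G : SimpleGraph W) (k : ℕ),
    3 ≤ k → KChordal G k → Nat.card W ≤ n → Nonempty W → ∃ v, KSimplicial G k v := by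
  intro n
  induction n with
  | zero =>
    intro W _ G k hk hch hcard hne
    have := Nat.card_pos (α := W)
    omega
  | succ n ih =>
    intro W _ G k hk hch hcard hne
    by_cases hcomp : ∀ u v : W, u ≠ v → G.Adj u v
    · obtain ⟨v⟩ := hne
      refine ⟨v, ?_, simpC2_all hch v⟩
      intro x y hvx hvy hxy
      exact ⟨hvx.ne', hvy.ne',
        Walk.cons (show (G.induce {u : W | u ≠ v}).Adj ⟨x, hvx.ne'⟩ ⟨y, hvy.ne'⟩ from
          hcomp x y hxy) Walk.nil,
        by simp only [Walk.length_cons, Walk.length_nil]; omega⟩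
    · push_neg at hcomp
      obtain ⟨u, v, huv, hnadj⟩ := hcomp
      have h₀ : ConnNonDom G {u} := by
        constructor
        · rw [SimpleGraph.connected_iff]
          refine ⟨?_, ⟨⟨u, rfl⟩⟩⟩
          intro a b
          have : a = b := Subtype.ext (by rw [a.2, b.2])
          rw [this]
        · intro h
          have hv : v ∈ closedNbhd G {u} := h ▸ Set.mem_univ v
          rcases hv with hv | ⟨_, a, ha, hadj⟩
          · exact huv hv.symm
          · rw [Set.mem_singleton_iff] at ha
            exact hnadj (ha ▸ hadj)
      obtain ⟨A, _, hA⟩ := exists_max_cnd G h₀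
      set Bc : Set W := (closedNbhd G A)ᶜ with hBc
      have hBne : Bc.Nonempty := Set.nonempty_compl.mpr hA.1.2
      obtain ⟨⟨a, ha⟩⟩ := hA.1.1.nonempty
      have hcard' : Nat.card ↥Bc ≤ n := by
        have hlt : Nat.card ↥Bc < Nat.card W :=
          Finite.card_subtype_lt (x := a) (fun h => h (Or.inl ha))
        omega
      obtain ⟨⟨b, hb⟩, hbsimp⟩ := ih (G.induce Bc) k hk (kchordal_induce hch Bc)
        hcard' hBne.to_subtype
      exact ⟨b, core_lemma hk hch hA hb hbsimp⟩

theorem stmt6 [Fintype V] (G : SimpleGraph V) (k : ℕ) (hk : 3 ≤ k)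
    (hch : KChordal G k) (hnc : NonComplete G) (A : Set V)
    (hA : MaxConnNonDom G A) :
    ∃ b ∉ closedNbhd G A, KSimplicial G k b := by
  set Bc : Set V := (closedNbhd G A)ᶜ with hBc
  have hBne : Bc.Nonempty := Set.nonempty_compl.mpr hA.1.2
  obtain ⟨⟨b, hb⟩, hbsimp⟩ := simp_exists (Nat.card ↥Bc) (G.induce Bc) k hk
    (kchordal_induce hch Bc) le_rfl hBne.to_subtype
  exact ⟨b, hb, core_lemma hk hch hA hb hbsimp⟩
end

section
/- For an integer k ≥ 3, if a graph G is k-chordal then G has a k-simplicial ordering, i.e., an ordering v_1, …, v_n of its vertices such that each v_i is k-simplicial in the induced subgraph G[{v_i, …, v_n}]. -/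
open SimpleGraph

variable {V : Type*}

/-! ### Auxiliary lemmas -/

section Aux

universe u

variable {W : Type*}

lemma induceAdjIff {G : SimpleGraph W} {s : Set W} {a b : s} :
    (G.induce s).Adj a b ↔ G.Adj a b := Iff.rfl

lemma walkToInduce {G : SimpleGraph W} {s : Set W} :
    ∀ {a b : W} (p : G.Walk a b), (∀ u ∈ p.support, u ∈ s) →
      ∀ (ha : a ∈ s) (hb : b ∈ s),
      ∃ q : (G.induce s).Walk ⟨a, ha⟩ ⟨b, hb⟩, q.length = p.length := by
  intro a b p
  induction p with
  | nil => intro _ ha hb; exact ⟨Walk.nil, rfl⟩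
  | @cons a c b h p ih =>
    intro hp ha hb
    have hc : c ∈ s := hp c (by simp)
    obtain ⟨q, hq⟩ := ih (fun u hu => hp u (by simp [hu])) hc hb
    exact ⟨Walk.cons (induceAdjIff.mpr h) q, by simp [hq]⟩

lemma walkFromInduce {G : SimpleGraph W} {s : Set W} :
    ∀ {a b : s} (p : (G.induce s).Walk a b),
    ∃ q : G.Walk a b, q.length = p.length ∧ q.support = p.support.map Subtype.val ∧
      q.edges = p.edges.map (Sym2.map Subtype.val) := by
  intro a b p
  induction p with
  | nil => exact ⟨Walk.nil, by simp⟩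
  | @cons a c b h p ih =>
    obtain ⟨q, h1, h2, h3⟩ := ih
    exact ⟨Walk.cons (induceAdjIff.mp h) q, by simp [h1, h2, h3]⟩

lemma kchordalInduce {G : SimpleGraph W} {k : ℕ} (h : KChordal G k) (s : Set W) :
    KChordal (G.induce s) k := by
  intro v c hc
  obtain ⟨q, h1, h2, h3⟩ := walkFromInduce c
  have hq : IsInducedCycle G q := by
    constructor
    · rw [Walk.isCycle_def]
      refine ⟨?_, ?_, ?_⟩
      · rw [Walk.isTrail_def, h3]
        exact (hc.1.isTrail.edges_nodup).map (Sym2.map.injective Subtype.val_injective)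
      · intro hqnil
        have : q.length = 0 := by rw [hqnil]; rfl
        rw [h1] at this
        exact hc.1.ne_nil (Walk.nil_iff_eq_nil.mp (Walk.length_eq_zero_iff.mp this))
      · rw [h2, ← List.map_tail]
        exact (hc.1.support_nodup).map Subtype.val_injective
    · intro u w hu hw hadj
      rw [h2] at hu hw
      obtain ⟨u', hu', rfl⟩ := List.mem_map.mp hu
      obtain ⟨w', hw', rfl⟩ := List.mem_map.mp hw
      have := hc.2 u' w' hu' hw' (induceAdjIff.mpr hadj)
      rw [h3]
      simpa using List.mem_map_of_mem (f := Sym2.map Subtype.val) this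
  have := h q hq
  omega

lemma edgeOfLengthOne {G : SimpleGraph W} {u w : W} (p : G.Walk u w) (hp : p.length = 1) :
    s(u, w) ∈ p.edges := by
  cases p with
  | nil => simp at hp
  | cons h q =>
    have h0 : q.length = 0 := by simpa using hp
    have := Walk.eq_of_length_eq_zero h0
    subst this
    simp

lemma walkShortcut {G : SimpleGraph W} {x y u w : W} (p : G.Walk x y)
    (hu : u ∈ p.support) (hadj : G.Adj u w) (hw : w ∈ p.support) (he : s(u, w) ∉ p.edges) :
    ∃ q : G.Walk x y, q.length < p.length := by
  classical
  have hlen : (p.takeUntil u hu).length + (p.dropUntil u hu).length = p.length := by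
    rw [← Walk.length_append, Walk.take_spec]
  have hw' : w ∈ (p.takeUntil u hu).support ∨ w ∈ (p.dropUntil u hu).support := by
    rw [← Walk.mem_support_append_iff, Walk.take_spec]; exact hw
  rcases hw' with hwt | hwd
  · set t := p.takeUntil u hu with ht
    have hsplit : (t.takeUntil w hwt).length + (t.dropUntil w hwt).length = t.length := by
      rw [← Walk.length_append, Walk.take_spec]
    have h0 : (t.dropUntil w hwt).length ≠ 0 :=
      fun h0 => hadj.ne' (Walk.eq_of_length_eq_zero h0)
    have h1 : (t.dropUntil w hwt).length ≠ 1 := by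
      intro h1
      have := edgeOfLengthOne _ h1
      have h2 : s(w, u) ∈ p.edges :=
        Walk.edges_takeUntil_subset _ _ (Walk.edges_dropUntil_subset _ _ this)
      rw [Sym2.eq_swap] at h2
      exact he h2
    refine ⟨(t.takeUntil w hwt).append (Walk.cons hadj.symm (p.dropUntil u hu)), ?_⟩
    rw [Walk.length_append, Walk.length_cons]
    omega
  · set d := p.dropUntil u hu with hd
    have hsplit : (d.takeUntil w hwd).length + (d.dropUntil w hwd).length = d.length := by
      rw [← Walk.length_append, Walk.take_spec]
    have h0 : (d.takeUntil w hwd).length ≠ 0 :=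
      fun h0 => hadj.ne (Walk.eq_of_length_eq_zero h0)
    have h1 : (d.takeUntil w hwd).length ≠ 1 := by
      intro h1
      have := edgeOfLengthOne _ h1
      exact he (Walk.edges_dropUntil_subset _ _ (Walk.edges_takeUntil_subset _ _ this))
    refine ⟨(p.takeUntil u hu).append (Walk.cons hadj (d.dropUntil w hwd)), ?_⟩
    rw [Walk.length_append, Walk.length_cons]
    omega

lemma existsInducedPath {G : SimpleGraph W} :
    ∀ (n : ℕ) {x y : W} (p : G.Walk x y), p.length ≤ n →
    ∃ q : G.Walk x y, IsInducedPath G q ∧ q.length ≤ p.length := by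
  intro n
  induction n using Nat.strong_induction_on with
  | _ n ih =>
    intro x y p hn
    classical
    by_cases hind : ∀ u w : W, u ∈ p.bypass.support → w ∈ p.bypass.support → G.Adj u w →
        s(u, w) ∈ p.bypass.edges
    · exact ⟨p.bypass, ⟨p.bypass_isPath, hind⟩, p.length_bypass_le⟩
    · push_neg at hind
      obtain ⟨u, w, hu, hw, hadj, he⟩ := hind
      obtain ⟨q, hq⟩ := walkShortcut p.bypass hu hadj hw he
      have hqn : q.length < n := lt_of_lt_of_le hq (le_trans p.length_bypass_le hn)
      obtain ⟨r, hr, hrl⟩ := ih q.length hqn q le_rfl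
      exact ⟨r, hr, le_trans hrl (le_trans (Nat.le_of_lt hq) p.length_bypass_le)⟩

lemma cycleBound {G : SimpleGraph W} {k : ℕ} (hk : 3 ≤ k) (hch : KChordal G k)
    {v x y : W} (hvx : G.Adj v x) (hvy : G.Adj v y) (hxy : ¬G.Adj x y) (hne : x ≠ y)
    (P : G.Walk x y) (hP : IsInducedPath G P)
    (hint : ∀ u ∈ P.support, u ≠ x → u ≠ y → u ≠ v ∧ ¬G.Adj v u) :
    P.length ≤ k - 2 := by
  have hvP : v ∉ P.support := fun hv => (hint v hv hvx.ne hvy.ne).1 rfl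
  set P' : G.Walk x v := P.concat hvy.symm with hP'
  have hP'supp : P'.support = P.support ++ [v] := by
    rw [hP', Walk.support_concat]
  have hP'edges : P'.edges = P.edges ++ [s(y, v)] := by
    rw [hP', Walk.edges_concat, List.concat_eq_append]
  have hP'path : P'.IsPath := by
    rw [Walk.isPath_def, hP'supp]
    have := hP.1
    rw [Walk.isPath_def] at this
    simp [List.nodup_append, this, hvP]
    intro a ha hav
    exact hvP (hav ▸ ha)
  have hcyc : (Walk.cons hvx P').IsCycle := by
    rw [Walk.cons_isCycle_iff]
    refine ⟨hP'path, fun hmem => ?_⟩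
    rw [hP'edges, List.mem_append] at hmem
    rcases hmem with hmem | hmem
    · exact hvP (Walk.fst_mem_support_of_mem_edges P hmem)
    · rw [List.mem_singleton, Sym2.eq_iff] at hmem
      rcases hmem with ⟨h1, h2⟩ | ⟨h1, h2⟩
      · exact hvy.ne h1
      · exact hne h2
  have hsup : ∀ z, z ∈ (Walk.cons hvx P').support ↔ z = v ∨ z ∈ P.support := by
    intro z
    rw [Walk.support_cons, List.mem_cons, hP'supp, List.mem_append, List.mem_singleton]
    tauto
  have hedges : (Walk.cons hvx P').edges = s(v, x) :: (P.edges ++ [s(y, v)]) := by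
    rw [Walk.edges_cons, hP'edges]
  have hCind : IsInducedCycle G (Walk.cons hvx P') := by
    refine ⟨hcyc, ?_⟩
    intro a b ha hb hab
    rw [hsup] at ha hb
    rw [hedges]
    have key : ∀ c, c ∈ P.support → G.Adj v c → s(v, c) ∈ s(v, x) :: (P.edges ++ [s(y, v)]) := by
      intro c hc hvc
      by_cases hcx : c = x
      · subst hcx; exact List.mem_cons_self
      by_cases hcy : c = y
      · subst hcy
        rw [List.mem_cons, List.mem_append, List.mem_singleton, Sym2.eq_swap]
        right; right; rfl
      · exact absurd hvc (hint c hc hcx hcy).2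
    rcases ha with ha | ha
    · rcases hb with hb | hb
      · rw [ha, hb] at hab; exact absurd rfl hab.ne
      · rw [ha]; exact key b hb (ha ▸ hab)
    · rcases hb with hb | hb
      · have hmem := key a ha (hb ▸ hab.symm)
        have heq : s(v, a) = s(a, v) := Sym2.eq_swap
        rw [hb]
        exact heq ▸ hmem
      · have := hP.2 a b ha hb hab
        rw [List.mem_cons, List.mem_append]
        right; left; exact this
  have hlen := hch _ hCind
  have hlen2 : (Walk.cons hvx P').length = P.length + 2 := by
    rw [Walk.length_cons, hP', Walk.length_concat]
  omega

lemma memClosedNbhdIff {G : SimpleGraph W} {A : Set W} {z : W} :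
    z ∈ closedNbhd G A ↔ z ∈ A ∨ (z ∉ A ∧ ∃ a ∈ A, G.Adj a z) := Iff.rfl

lemma closedNbhdMono {G : SimpleGraph W} {A B : Set W} (h : A ⊆ B) :
    closedNbhd G A ⊆ closedNbhd G B := by
  intro z hz
  rcases memClosedNbhdIff.mp hz with hz | ⟨hzA, a, haA, hadj⟩
  · exact Or.inl (h hz)
  · by_cases hzB : z ∈ B
    · exact Or.inl hzB
    · exact Or.inr ⟨hzB, a, h haA, hadj⟩

lemma notAdjOutside {G : SimpleGraph W} {A : Set W} {d : W} (hd : d ∉ closedNbhd G A)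
    {a : W} (ha : a ∈ A) : ¬G.Adj a d := fun h =>
  hd (Or.inr ⟨fun hdA => hd (Or.inl hdA), a, ha, h⟩)

lemma induceSingletonConnected (G : SimpleGraph W) (d : W) : (G.induce {d}).Connected := by
  haveI : Nonempty (({d} : Set W)) := ⟨⟨d, rfl⟩⟩
  refine Connected.mk ?_
  rintro ⟨u, hu⟩ ⟨v, hv⟩
  have : (⟨u, hu⟩ : ({d} : Set W)) = ⟨v, hv⟩ := Subtype.ext (by
    have h1 : u = d := hu
    have h2 : v = d := hv
    exact h1.trans h2.symm)
  rw [this]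

lemma connectedInduceInsert {G : SimpleGraph W} {A : Set W} (hA : (G.induce A).Connected)
    {a w : W} (ha : a ∈ A) (haw : G.Adj a w) :
    (G.induce (insert w A)).Connected := by
  have hwm : w ∈ insert w A := Set.mem_insert _ _
  have hsub : A ⊆ insert w A := Set.subset_insert _ _
  have key : ∀ u : (insert w A : Set W), (G.induce (insert w A)).Reachable u ⟨a, hsub ha⟩ := by
    rintro ⟨u, hu⟩
    rcases Set.mem_insert_iff.mp hu with h | huA
    · exact (induceAdjIff.mpr (show G.Adj u a from by rw [h]; exact haw.symm) :
        (G.induce (insert w A)).Adj ⟨u, hu⟩ ⟨a, hsub ha⟩).reachable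
    · obtain ⟨p⟩ := hA.preconnected ⟨u, huA⟩ ⟨a, ha⟩
      obtain ⟨q, _, hq2, _⟩ := walkFromInduce p
      have hsupp : ∀ z ∈ q.support, z ∈ insert w A := by
        intro z hz
        rw [hq2] at hz
        obtain ⟨z', _, rfl⟩ := List.mem_map.mp hz
        exact hsub z'.2
      obtain ⟨r, _⟩ := walkToInduce q hsupp (hsub huA) (hsub ha)
      exact ⟨r⟩
  haveI : Nonempty ((insert w A : Set W)) := ⟨⟨w, hwm⟩⟩
  exact Connected.mk (fun u v => (key u).trans (key v).symm)

lemma existsMaxCND [Finite W] {H : SimpleGraph W} {A : Set W} (hA : ConnNonDom H A) :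
    ∃ B : Set W, A ⊆ B ∧ MaxConnNonDom H B := by
  obtain ⟨B, hB, hmax⟩ := Set.Finite.exists_maximalFor id
    {B : Set W | A ⊆ B ∧ ConnNonDom H B} (Set.toFinite _) ⟨A, subset_rfl, hA⟩
  exact ⟨B, hB.1, ⟨hB.2, fun A' hsub hA' => Set.Subset.antisymm (hmax ⟨hB.1.trans hsub, hA'⟩ hsub) hsub⟩⟩

lemma cndDominates {G : SimpleGraph W} {A : Set W} (hmax : MaxConnNonDom G A)
    {w d : W} (hw : w ∈ setNbhd G A) (hd : d ∉ closedNbhd G A) : G.Adj w d := by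
  obtain ⟨⟨hconn, hndom⟩, hmaxi⟩ := hmax
  obtain ⟨hwA, a, haA, haw⟩ := hw
  have hconn' : (G.induce (insert w A)).Connected := connectedInduceInsert hconn haA haw
  have hne : ¬ConnNonDom G (insert w A) := by
    intro hc
    have := hmaxi _ (Set.subset_insert _ _) hc
    exact hwA (this ▸ Set.mem_insert w A)
  have huniv : closedNbhd G (insert w A) = Set.univ := by
    by_contra h; exact hne ⟨hconn', h⟩
  have hd' : d ∈ closedNbhd G (insert w A) := huniv ▸ Set.mem_univ d
  rcases memClosedNbhdIff.mp hd' with h | ⟨hdni, z, hz, hzd⟩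
  · rcases Set.mem_insert_iff.mp h with h | h
    · subst h
      exact absurd (Or.inr ⟨hwA, a, haA, haw⟩) hd
    · exact absurd (Or.inl h) hd
  · rcases Set.mem_insert_iff.mp hz with h | hzA
    · subst h; exact hzd
    · exact absurd (Or.inr ⟨fun hdA => hd (Or.inl hdA), z, hzA, hzd⟩) hd

lemma existsInducedPathThrough (G : SimpleGraph W) {A : Set W} (hA : (G.induce A).Connected)
    {x y : W} (hx : x ∈ setNbhd G A) (hy : y ∈ setNbhd G A) (hne : x ≠ y) :
    ∃ P : G.Walk x y, IsInducedPath G P ∧ ∀ u ∈ P.support, u ≠ x → u ≠ y → u ∈ A := by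
  obtain ⟨hxA, a, haA, hax⟩ := hx
  obtain ⟨hyA, b, hbA, hby⟩ := hy
  set s : Set W := insert x (insert y A) with hs
  have hsubA : A ⊆ s := fun z hz => Set.mem_insert_of_mem _ (Set.mem_insert_of_mem _ hz)
  have hxs : x ∈ s := Set.mem_insert _ _
  have hys : y ∈ s := Set.mem_insert_of_mem _ (Set.mem_insert _ _)
  have hreach : (G.induce s).Reachable ⟨x, hxs⟩ ⟨y, hys⟩ := by
    have r1 : (G.induce s).Reachable ⟨x, hxs⟩ ⟨a, hsubA haA⟩ :=
      (induceAdjIff.mpr hax.symm :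
        (G.induce s).Adj ⟨x, hxs⟩ ⟨a, hsubA haA⟩).reachable
    have r3 : (G.induce s).Reachable ⟨b, hsubA hbA⟩ ⟨y, hys⟩ :=
      (induceAdjIff.mpr hby :
        (G.induce s).Adj ⟨b, hsubA hbA⟩ ⟨y, hys⟩).reachable
    have r2 : (G.induce s).Reachable ⟨a, hsubA haA⟩ ⟨b, hsubA hbA⟩ := by
      obtain ⟨p⟩ := hA.preconnected ⟨a, haA⟩ ⟨b, hbA⟩
      obtain ⟨q, _, hq2, _⟩ := walkFromInduce p
      have hsupp : ∀ z ∈ q.support, z ∈ s := by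
        intro z hz
        rw [hq2] at hz
        obtain ⟨z', _, rfl⟩ := List.mem_map.mp hz
        exact hsubA z'.2
      obtain ⟨r, _⟩ := walkToInduce q hsupp (hsubA haA) (hsubA hbA)
      exact ⟨r⟩
    exact (r1.trans r2).trans r3
  obtain ⟨p0⟩ := hreach
  obtain ⟨q, hqind, _⟩ := existsInducedPath p0.length p0 le_rfl
  obtain ⟨P, hP1, hP2, hP3⟩ := walkFromInduce q
  refine ⟨P, ⟨?_, ?_⟩, ?_⟩
  · rw [Walk.isPath_def, hP2]
    exact ((Walk.isPath_def q).mp hqind.1).map Subtype.val_injective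
  · intro c e hc he hadj
    rw [hP2] at hc he
    obtain ⟨c', hc', rfl⟩ := List.mem_map.mp hc
    obtain ⟨e', he', rfl⟩ := List.mem_map.mp he
    have := hqind.2 c' e' hc' he' (induceAdjIff.mpr hadj)
    rw [hP3]
    simpa using List.mem_map_of_mem (f := Sym2.map Subtype.val) this
  · intro c hc hcx hcy
    rw [hP2] at hc
    obtain ⟨c', _, rfl⟩ := List.mem_map.mp hc
    rcases Set.mem_insert_iff.mp c'.2 with h | h
    · exact absurd h hcx
    · rcases Set.mem_insert_iff.mp h with h | h
      · exact absurd h hcy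
      · exact h

lemma simpC2Auto {G : SimpleGraph W} {k : ℕ} (hk : 3 ≤ k) (hch : KChordal G k) (v : W) :
    SimpC2 G k v := by
  intro x y hvx hvy hxy hne p hp hint
  exact cycleBound hk hch hvx hvy hxy hne p hp
    (fun u hu hux huy => hint u ⟨hu, hux, huy⟩)

lemma existsSimpC1MaxCND (k : ℕ) (hk : 3 ≤ k) :
    ∀ (n : ℕ) {W : Type u} [Finite W] (H : SimpleGraph W), Nat.card W ≤ n →
      KChordal H k → ∀ A : Set W, MaxConnNonDom H A →
      ∃ v : W, v ∉ closedNbhd H A ∧ SimpC1 H k v := by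
  intro n
  induction n using Nat.strong_induction_on with
  | _ n ih =>
  intro W _ H hcard hch A hmax
  classical
  obtain ⟨⟨hconnA, hndom⟩, hmaxi⟩ := hmax
  have hmax' : MaxConnNonDom H A := ⟨⟨hconnA, hndom⟩, hmaxi⟩
  have hAne : A.Nonempty := by
    obtain ⟨⟨a, ha⟩⟩ := hconnA.nonempty
    exact ⟨a, ha⟩
  obtain ⟨a0, ha0⟩ := hAne
  have hDne : ∃ d, d ∉ closedNbhd H A := by
    by_contra h
    push_neg at h
    exact hndom (Set.eq_univ_of_forall h)
  obtain ⟨d0, hd0⟩ := hDne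
  by_cases hcase : ∀ d, d ∉ closedNbhd H A → ∀ u, u ∉ A → u = d ∨ H.Adj d u
  · refine ⟨d0, hd0, ?_⟩
    intro x y hvx hvy hxy
    refine ⟨hvx.ne', hvy.ne', ?_⟩
    have hd0A : d0 ∉ A := fun h => hd0 (Or.inl h)
    have hxA : x ∉ A := fun h => notAdjOutside hd0 h hvx.symm
    have hyA : y ∉ A := fun h => notAdjOutside hd0 h hvy.symm
    by_cases hadj : H.Adj x y
    · refine ⟨Walk.cons (induceAdjIff.mpr hadj) Walk.nil, ?_⟩
      simp only [Walk.length_cons, Walk.length_nil]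
      omega
    · have hxS : x ∈ setNbhd H A := by
        by_contra hxS
        have hxD : x ∉ closedNbhd H A := by
          intro hc
          rcases memClosedNbhdIff.mp hc with h | h
          · exact hxA h
          · exact hxS h
        rcases hcase x hxD y hyA with h | h
        · exact hxy h.symm
        · exact hadj h
      have hyS : y ∈ setNbhd H A := by
        by_contra hyS
        have hyD : y ∉ closedNbhd H A := by
          intro hc
          rcases memClosedNbhdIff.mp hc with h | h
          · exact hyA h
          · exact hyS h
        rcases hcase y hyD x hxA with h | h
        · exact hxy h
        · exact hadj h.symm
      obtain ⟨P, hPind, hPsupp⟩ := existsInducedPathThrough H hconnA hxS hyS hxy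
      have hPlen : P.length ≤ k - 2 :=
        cycleBound hk hch hvx hvy hadj hxy P hPind (fun u hu hux huy =>
          ⟨fun h => hd0A (h ▸ hPsupp u hu hux huy),
           fun h => notAdjOutside hd0 (hPsupp u hu hux huy) h.symm⟩)
      have hsupp : ∀ u ∈ P.support, u ∈ {u : W | u ≠ d0} := by
        intro u hu
        by_cases hux : u = x
        · subst hux; exact hvx.ne'
        by_cases huy : u = y
        · subst huy; exact hvy.ne'
        · exact fun h => hd0A (h ▸ hPsupp u hu hux huy)
      obtain ⟨q, hq⟩ := walkToInduce P hsupp hvx.ne' hvy.ne'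
      exact ⟨q, by omega⟩
  · push_neg at hcase
    obtain ⟨d1, hd1, u1, hu1A, hu1ne, hu1adj⟩ := hcase
    have hd1A : d1 ∉ A := fun h => hd1 (Or.inl h)
    have hd1c : d1 ∈ Aᶜ := hd1A
    have hu1c : u1 ∈ Aᶜ := hu1A
    have hcnd : ConnNonDom (H.induce Aᶜ) {⟨d1, hd1c⟩} := by
      refine ⟨induceSingletonConnected _ _, fun huniv => ?_⟩
      have hmem : (⟨u1, hu1c⟩ : (Aᶜ : Set W)) ∈ closedNbhd (H.induce Aᶜ) {⟨d1, hd1c⟩} :=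
        huniv ▸ Set.mem_univ _
      rcases memClosedNbhdIff.mp hmem with h | ⟨_, z, hz, hadj⟩
      · exact hu1ne (congrArg Subtype.val (Set.mem_singleton_iff.mp h))
      · rw [Set.mem_singleton_iff] at hz
        subst hz
        exact hu1adj (induceAdjIff.mp hadj)
    obtain ⟨Astar, hsubst, hmaxst⟩ := existsMaxCND hcnd
    have hcardlt : Nat.card (Aᶜ : Set W) < n :=
      lt_of_lt_of_le (Finite.card_subtype_lt (x := a0) (by simp [ha0])) hcard
    obtain ⟨v', hv'out, hv'simp⟩ :=
      ih _ hcardlt (H.induce Aᶜ) le_rfl (kchordalInduce hch _) Astar hmaxst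
    have hvD : (v' : W) ∉ closedNbhd H A := by
      intro hvc
      rcases memClosedNbhdIff.mp hvc with h | hS
      · exact v'.2 h
      · have hadj : H.Adj (v' : W) d1 := cndDominates hmax' hS hd1
        have hvmem : v' ∈ closedNbhd (H.induce Aᶜ) {⟨d1, hd1c⟩} := by
          by_cases hvd : v' = ⟨d1, hd1c⟩
          · exact Or.inl hvd
          · exact Or.inr ⟨fun h => hvd h, ⟨d1, hd1c⟩, rfl,
              (induceAdjIff.mpr hadj.symm : (H.induce Aᶜ).Adj ⟨d1, hd1c⟩ v')⟩
        exact hv'out (closedNbhdMono hsubst hvmem)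
    refine ⟨↑v', hvD, ?_⟩
    intro x y hvx hvy hxy
    refine ⟨hvx.ne', hvy.ne', ?_⟩
    have hxC : x ∈ Aᶜ := fun hxA => notAdjOutside hvD hxA hvx.symm
    have hyC : y ∈ Aᶜ := fun hyA => notAdjOutside hvD hyA hvy.symm
    have hadjx : (H.induce Aᶜ).Adj v' ⟨x, hxC⟩ := induceAdjIff.mpr hvx
    have hadjy : (H.induce Aᶜ).Adj v' ⟨y, hyC⟩ := induceAdjIff.mpr hvy
    obtain ⟨hx', hy', p, hplen⟩ := hv'simp ⟨x, hxC⟩ ⟨y, hyC⟩ hadjx hadjy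
      (fun h => hxy (congrArg Subtype.val h))
    obtain ⟨q1, hq1len, hq1supp, _⟩ := walkFromInduce p
    obtain ⟨q2, hq2len, hq2supp, _⟩ := walkFromInduce q1
    have hsupp : ∀ u ∈ q2.support, u ∈ {u : W | u ≠ ↑v'} := by
      intro u hu
      rw [hq2supp] at hu
      obtain ⟨u', hu', rfl⟩ := List.mem_map.mp hu
      rw [hq1supp] at hu'
      obtain ⟨u'', _, rfl⟩ := List.mem_map.mp hu'
      exact fun h => u''.2 (Subtype.ext h)
    obtain ⟨q3, hq3⟩ := walkToInduce q2 hsupp hvx.ne' hvy.ne'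
    exact ⟨q3, by omega⟩

lemma existsSimpC1 {W : Type u} [Finite W] [Nonempty W] (H : SimpleGraph W) (k : ℕ)
    (hk : 3 ≤ k) (hch : KChordal H k) : ∃ v, SimpC1 H k v := by
  classical
  by_cases hcomp : ∀ u w : W, u ≠ w → H.Adj u w
  · obtain ⟨v⟩ := ‹Nonempty W›
    refine ⟨v, fun x y hvx hvy hxy => ⟨hvx.ne', hvy.ne', ?_⟩⟩
    refine ⟨Walk.cons (induceAdjIff.mpr (hcomp x y hxy)) Walk.nil, ?_⟩
    simp only [Walk.length_cons, Walk.length_nil]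
    omega
  · push_neg at hcomp
    obtain ⟨u, w, hne, hnadj⟩ := hcomp
    have hcnd : ConnNonDom H {u} := by
      refine ⟨induceSingletonConnected _ _, fun huniv => ?_⟩
      have hmem : w ∈ closedNbhd H {u} := huniv ▸ Set.mem_univ _
      rcases memClosedNbhdIff.mp hmem with h | ⟨_, z, hz, hadj⟩
      · exact hne (Set.mem_singleton_iff.mp h).symm
      · rw [Set.mem_singleton_iff] at hz
        subst hz
        exact hnadj hadj
    obtain ⟨B, _, hmaxB⟩ := existsMaxCND hcnd
    obtain ⟨v, _, hv⟩ := existsSimpC1MaxCND k hk (Nat.card W) H le_rfl hch B hmaxB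
    exact ⟨v, hv⟩

lemma simpC1Congr {G : SimpleGraph W} {k : ℕ} {s t : Set W} (h : s = t) {x y : W}
    (hxy : x = y) (hx : x ∈ s) (hy : y ∈ t)
    (hs : SimpC1 (G.induce s) k ⟨x, hx⟩) : SimpC1 (G.induce t) k ⟨y, hy⟩ := by
  subst h
  subst hxy
  exact hs

end Aux

lemma orderingAux {V : Type*} [Fintype V] (G : SimpleGraph V) (k : ℕ) (hk : 3 ≤ k)
    (hch : KChordal G k) :
    ∀ (m : ℕ) (s : Set V), s.ncard = m →
      ∃ f : Fin m → V, Function.Injective f ∧ (∀ i, f i ∈ s) ∧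
        ∀ i : Fin m, ∃ hm : f i ∈ {w ∈ s | ∀ j, j < i → f j ≠ w},
          SimpC1 (G.induce {w ∈ s | ∀ j, j < i → f j ≠ w}) k ⟨f i, hm⟩ := by
  intro m
  induction m with
  | zero =>
    intro s _
    exact ⟨Fin.elim0, fun i => i.elim0, fun i => i.elim0, fun i => i.elim0⟩
  | succ m ihm =>
    intro s hs
    have hsne : s.Nonempty := Set.nonempty_of_ncard_ne_zero (by omega)
    haveI : Nonempty ↥s := hsne.to_subtype
    obtain ⟨v0, hv0C1⟩ := existsSimpC1 (G.induce s) k hk (kchordalInduce hch s)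
    set s' : Set V := s \ {↑v0} with hs'
    have hs'card : s'.ncard = m := by
      rw [hs', Set.ncard_diff_singleton_of_mem v0.2]
      omega
    obtain ⟨f', hinj', hmem', hprop'⟩ := ihm s' hs'card
    have hfmem' : ∀ j, f' j ∈ s' := hmem'
    refine ⟨Fin.cases (↑v0) f', ?_, ?_, ?_⟩
    · intro i j hij
      rcases Fin.eq_zero_or_eq_succ i with rfl | ⟨i', rfl⟩ <;>
        rcases Fin.eq_zero_or_eq_succ j with rfl | ⟨j', rfl⟩
      · rfl
      · have hij' : (↑v0 : V) = f' j' := hij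
        exact absurd hij'.symm (hfmem' j').2
      · have hij' : f' i' = (↑v0 : V) := hij
        exact absurd hij' (hfmem' i').2
      · have hij' : f' i' = f' j' := hij
        exact congrArg Fin.succ (hinj' hij')
    · intro i
      rcases Fin.eq_zero_or_eq_succ i with rfl | ⟨i', rfl⟩
      · exact (v0.2 : (↑v0 : V) ∈ s)
      · exact ((hfmem' i').1 : f' i' ∈ s)
    · intro i
      rcases Fin.eq_zero_or_eq_succ i with rfl | ⟨i', rfl⟩
      · have hset : s = {w ∈ s | ∀ j : Fin (m + 1), j < 0 → Fin.cases (↑v0) f' j ≠ w} := by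
          ext w
          simp only [Set.mem_setOf_eq, iff_self_and]
          intro _ j hj
          exact absurd hj (Fin.not_lt_zero j)
        have hval : (v0 : V) = Fin.cases (motive := fun _ => V) (↑v0) f' 0 := by
          rw [Fin.cases_zero]
        have hmem0 : Fin.cases (motive := fun _ => V) (↑v0) f' 0 ∈
            {w ∈ s | ∀ j : Fin (m + 1), j < 0 → Fin.cases (↑v0) f' j ≠ w} := by
          rw [← hset, Fin.cases_zero]; exact v0.2
        exact ⟨hmem0, simpC1Congr hset hval v0.2 hmem0 hv0C1⟩
      · obtain ⟨hm', hC1⟩ := hprop' i'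
        have hset : {w ∈ s' | ∀ j, j < i' → f' j ≠ w} =
            {w ∈ s | ∀ j : Fin (m + 1), j < i'.succ → Fin.cases (↑v0) f' j ≠ w} := by
          ext w
          simp only [Set.mem_setOf_eq, hs', Set.mem_diff, Set.mem_singleton_iff]
          constructor
          · rintro ⟨⟨hws, hwv⟩, hj⟩
            refine ⟨hws, ?_⟩
            intro j hjlt
            rcases Fin.eq_zero_or_eq_succ j with rfl | ⟨j', rfl⟩
            · rw [Fin.cases_zero]; exact fun h => hwv h.symm
            · rw [Fin.cases_succ]
              exact hj j' (by rwa [Fin.succ_lt_succ_iff] at hjlt)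
          · rintro ⟨hws, hj⟩
            refine ⟨⟨hws, ?_⟩, ?_⟩
            · have := hj 0 (Fin.succ_pos i')
              rw [Fin.cases_zero] at this
              exact fun h => this h.symm
            · intro j hjlt
              have := hj j.succ (by rwa [Fin.succ_lt_succ_iff])
              rwa [Fin.cases_succ] at this
        have hval : f' i' = Fin.cases (motive := fun _ => V) (↑v0) f' i'.succ := by
          rw [Fin.cases_succ]
        have hmem1 : Fin.cases (motive := fun _ => V) (↑v0) f' i'.succ ∈
            {w ∈ s | ∀ j : Fin (m + 1), j < i'.succ → Fin.cases (↑v0) f' j ≠ w} := by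
          rw [← hset, Fin.cases_succ]; exact hm'
        exact ⟨hmem1, simpC1Congr hset hval hm' hmem1 hC1⟩

theorem stmt9 [Fintype V] (G : SimpleGraph V) (k : ℕ) (hk : 3 ≤ k)
    (hch : KChordal G k) :
    ∃ σ : Fin (Fintype.card V) ≃ V, KSimplicialOrdering G k σ := by
  classical
  obtain ⟨f, hinj, hmem, hprop⟩ := orderingAux G k hk hch (Fintype.card V) Set.univ
    (by rw [Set.ncard_univ, Nat.card_eq_fintype_card])
  have hbij : Function.Bijective f :=
    (Fintype.bijective_iff_injective_and_card f).mpr ⟨hinj, by simp⟩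
  refine ⟨Equiv.ofBijective f hbij, ?_⟩
  intro i
  set σ := Equiv.ofBijective f hbij with hσ
  have hσi : ∀ j, σ j = f j := fun j => rfl
  have hset : {w ∈ (Set.univ : Set V) | ∀ j, j < i → f j ≠ w} = laterSet σ i := by
    ext w
    simp only [Set.mem_setOf_eq, Set.mem_univ, true_and, laterSet]
    constructor
    · intro h
      by_contra hlt
      push_neg at hlt
      exact h (σ.symm w) hlt (σ.apply_symm_apply w)
    · intro hle j hj h
      have : σ.symm w = j := σ.symm_apply_eq.mpr h.symm
      rw [this] at hle
      exact absurd hle (not_le.mpr hj)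
  obtain ⟨hm, hC1⟩ := hprop i
  have hmem2 : σ i ∈ laterSet σ i := by simp [laterSet]
  constructor
  · exact simpC1Congr hset (hσi i).symm hm hmem2 hC1
  · exact simpC2Auto hk (kchordalInduce hch _) _
end

section
/- For an integer k ≥ 3, if a graph G admits a k-simplicial ordering of its vertices, then G is k-chordal. -/
open SimpleGraph

variable {V : Type*}

section Aux
variable {G : SimpleGraph V} {S : Set V}


def liftWalk : ∀ {a b : V} (p : G.Walk a b), (∀ u ∈ p.support, u ∈ S) →
    ∀ (ha : a ∈ S) (hb : b ∈ S), (G.induce S).Walk ⟨a, ha⟩ ⟨b, hb⟩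
  | _, _, .nil, _, _, _ => .nil
  | _, _, .cons h q, hs, _, hb =>
      .cons (by simpa using h)
        (liftWalk q (fun u hu => hs u (by simp [hu])) (hs _ (by simp)) hb)

lemma liftWalk_length : ∀ {a b : V} (p : G.Walk a b) (hs : ∀ u ∈ p.support, u ∈ S)
    (ha : a ∈ S) (hb : b ∈ S), (liftWalk p hs ha hb).length = p.length
  | _, _, .nil, _, _, _ => rfl
  | _, _, .cons h q, hs, ha, hb => by
      simp [liftWalk, liftWalk_length q _ _ _]

lemma liftWalk_support : ∀ {a b : V} (p : G.Walk a b) (hs : ∀ u ∈ p.support, u ∈ S)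
    (ha : a ∈ S) (hb : b ∈ S),
    (liftWalk p hs ha hb).support.map Subtype.val = p.support
  | _, _, .nil, _, _, _ => rfl
  | _, _, .cons h q, hs, ha, hb => by
      simp [liftWalk, liftWalk_support q _ _ _]

lemma liftWalk_edges : ∀ {a b : V} (p : G.Walk a b) (hs : ∀ u ∈ p.support, u ∈ S)
    (ha : a ∈ S) (hb : b ∈ S),
    (liftWalk p hs ha hb).edges.map (Sym2.map Subtype.val) = p.edges
  | _, _, .nil, _, _, _ => rfl
  | _, _, .cons h q, hs, ha, hb => by
      simp [liftWalk, liftWalk_edges q _ _ _]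

lemma path_edge_ends : ∀ {a b : V} (p : G.Walk a b), p.IsPath → s(a, b) ∈ p.edges →
    p.length = 1 := by
  intro a b p hp he
  cases p with
  | nil => simp at he
  | cons h q =>
    rw [Walk.cons_isPath_iff] at hp
    rw [Walk.edges_cons, List.mem_cons] at he
    rcases he with he | he
    · rw [Sym2.eq_iff] at he
      rcases he with ⟨-, hbc⟩ | ⟨hac, -⟩
      · subst hbc
        have := Walk.isPath_iff_eq_nil.mp hp.1
        subst this; simp
      · exact absurd hac h.ne
    · exact absurd (q.fst_mem_support_of_mem_edges he) hp.2


lemma closed_mem_support_iff {a : V} {w : G.Walk a a} (hw : w ≠ Walk.nil) (u : V) :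
    u ∈ w.support ↔ u ∈ w.support.tail := by
  cases w with
  | nil => cases hw rfl
  | cons h q =>
    simp only [Walk.support_cons, List.tail_cons, List.mem_cons]
    exact ⟨fun h' => h'.elim (fun e => e ▸ q.end_mem_support) id, Or.inr⟩

lemma key {G : SimpleGraph V} {k : ℕ} (hk : 3 ≤ k) {S : Set V} {v : V} (hv : v ∈ S)
    (hsimp : SimpC2 (G.induce S) k ⟨v, hv⟩) (c : G.Walk v v) (hc : IsInducedCycle G c)
    (hsub : ∀ u ∈ c.support, u ∈ S) : c.length ≤ k := by
  by_contra hlen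
  push_neg at hlen
  cases c with
  | nil => simp at hlen
  | cons hvx q =>
    rename_i x
    have hqr : ¬ q.reverse.Nil := by
      rw [Walk.not_nil_iff_lt_length, Walk.length_reverse]
      have : k < q.length + 1 := by simpa using hlen
      omega
    obtain ⟨y, hvy, r, hrev⟩ := Walk.not_nil_iff.mp hqr
    have hq : q = (Walk.cons hvy r).reverse := by rw [← hrev, Walk.reverse_reverse]
    subst hq
    have hclen : k < r.length + 2 := by
      have h := hlen; simp [Walk.length_reverse] at h; omega
    have hr2 : 2 ≤ r.length := by omega
    have hsupp : ∀ u, u ∈ (Walk.cons hvx (Walk.cons hvy r).reverse).support ↔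
        u = v ∨ u ∈ r.support := by
      intro u
      simp only [Walk.support_cons, Walk.support_reverse, List.mem_cons, List.mem_reverse]
      try tauto
    have hedg : ∀ e, e ∈ (Walk.cons hvx (Walk.cons hvy r).reverse).edges ↔
        e = s(v, x) ∨ e = s(v, y) ∨ e ∈ r.edges := by
      intro e
      simp only [Walk.edges_cons, Walk.edges_reverse, List.mem_cons, List.mem_reverse]
      try tauto
    have hnodup := hc.1.support_nodup
    simp only [Walk.support_cons, List.tail_cons, Walk.support_reverse,
      List.nodup_reverse, List.nodup_cons] at hnodup
    obtain ⟨hvr, hrnodup⟩ := hnodup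
    have hrpath : r.IsPath := (Walk.isPath_def r).mpr hrnodup
    have hxr : x ∈ r.support := r.end_mem_support
    have hyr : y ∈ r.support := r.start_mem_support
    have hxy : x ≠ y := by
      intro h
      subst h
      have := Walk.isPath_iff_eq_nil.mp hrpath
      subst this
      simp at hr2
    have hindr : ∀ u w : V, u ∈ r.support → w ∈ r.support → G.Adj u w →
        s(u, w) ∈ r.edges := by
      intro u w hu hw ha
      have h1 := hc.2 u w ((hsupp u).mpr (Or.inr hu)) ((hsupp w).mpr (Or.inr hw)) ha
      rcases (hedg _).mp h1 with h2 | h2 | h2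
      · rw [Sym2.eq_iff] at h2
        rcases h2 with ⟨rfl, -⟩ | ⟨-, rfl⟩ <;> [exact absurd hu hvr; exact absurd hw hvr]
      · rw [Sym2.eq_iff] at h2
        rcases h2 with ⟨rfl, -⟩ | ⟨-, rfl⟩ <;> [exact absurd hu hvr; exact absurd hw hvr]
      · exact h2
    have hnadj : ¬ G.Adj x y := by
      intro ha
      have h1 := hindr x y hxr hyr ha
      rw [Sym2.eq_swap] at h1
      have := path_edge_ends r hrpath h1
      omega
    have hint : ∀ u ∈ r.support, u ≠ y → u ≠ x → u ≠ v ∧ ¬ G.Adj v u := by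
      intro u hu hny hnx
      refine ⟨fun h => hvr (h ▸ hu), fun ha => ?_⟩
      have h1 := hc.2 v u ((hsupp v).mpr (Or.inl rfl)) ((hsupp u).mpr (Or.inr hu)) ha
      rcases (hedg _).mp h1 with h2 | h2 | h2
      · rw [Sym2.eq_iff] at h2
        rcases h2 with ⟨-, rfl⟩ | ⟨h3, rfl⟩
        · exact hnx rfl
        · exact hvr (h3 ▸ hxr)
      · rw [Sym2.eq_iff] at h2
        rcases h2 with ⟨-, rfl⟩ | ⟨h3, rfl⟩
        · exact hny rfl
        · exact hvr (h3 ▸ hyr)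
      · exact hvr (r.fst_mem_support_of_mem_edges h2)
    have hsubr : ∀ u ∈ r.support, u ∈ S := fun u hu =>
      hsub u ((hsupp u).mpr (Or.inr hu))
    have hyS : y ∈ S := hsubr y hyr
    have hxS : x ∈ S := hsubr x hxr
    set P := liftWalk r hsubr hyS hxS with hP
    have hPsupp := liftWalk_support r hsubr hyS hxS
    have hPedges := liftWalk_edges r hsubr hyS hxS
    have adj1 : (G.induce S).Adj ⟨v, hv⟩ ⟨y, hyS⟩ := by simp [hvy]
    have adj2 : (G.induce S).Adj ⟨v, hv⟩ ⟨x, hxS⟩ := by simp [hvx]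
    have nadj : ¬ (G.induce S).Adj ⟨y, hyS⟩ ⟨x, hxS⟩ := by
      intro h
      have h2 : G.Adj y x := by simpa using h
      exact hnadj h2.symm
    have hne : (⟨y, hyS⟩ : S) ≠ ⟨x, hxS⟩ := fun h =>
      hxy (congrArg Subtype.val h).symm
    have hPind : IsInducedPath (G.induce S) P := by
      constructor
      · rw [Walk.isPath_def]
        have : (P.support.map Subtype.val).Nodup := hPsupp ▸ hrnodup
        exact this.of_map _
      · intro u' w' hu hw ha
        have hu' : u'.val ∈ r.support := by
          rw [← hPsupp]; exact List.mem_map_of_mem hu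
        have hw' : w'.val ∈ r.support := by
          rw [← hPsupp]; exact List.mem_map_of_mem hw
        have hadj : G.Adj u'.val w'.val := by simpa using ha
        have he := hindr _ _ hu' hw' hadj
        rw [← hPedges] at he
        obtain ⟨e, hel, hee⟩ := List.mem_map.mp he
        have hmapeq : Sym2.map Subtype.val e =
            Sym2.map (Subtype.val : S → V) s(u', w') := by
          rw [hee]; simp
        have heq : e = s(u', w') := Sym2.map.injective Subtype.val_injective hmapeq
        rwa [← heq]
    have hintP : ∀ u' : S, InternalVert (G.induce S) P u' →
        u' ≠ (⟨v, hv⟩ : S) ∧ ¬ (G.induce S).Adj ⟨v, hv⟩ u' := by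
      rintro u' ⟨hu, hny, hnx⟩
      have hu' : u'.val ∈ r.support := by
        rw [← hPsupp]; exact List.mem_map_of_mem hu
      have h1 := hint u'.val hu' (fun h => hny (Subtype.ext h)) (fun h => hnx (Subtype.ext h))
      exact ⟨fun h => h1.1 (congrArg Subtype.val h), fun h => h1.2 (by simpa using h)⟩
    have hfin := hsimp ⟨y, hyS⟩ ⟨x, hxS⟩ adj1 adj2 nadj hne P hPind hintP
    rw [hP, liftWalk_length] at hfin
    omega

end Aux

theorem stmt10 [Fintype V] (G : SimpleGraph V) (k : ℕ) (hk : 3 ≤ k)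
    (σ : Fin (Fintype.card V) ≃ V) (hσ : KSimplicialOrdering G k σ) :
    KChordal G k := by
  intro v₀ c hc
  classical
  have hne : (c.support.toFinset.image σ.symm).Nonempty :=
    ⟨σ.symm v₀, Finset.mem_image_of_mem _ (List.mem_toFinset.mpr c.start_mem_support)⟩
  set F := c.support.toFinset.image σ.symm with hF
  set i := F.min' hne with hi
  have hmin : ∀ u ∈ c.support, i ≤ σ.symm u := fun u hu =>
    Finset.min'_le F _ (Finset.mem_image_of_mem _ (List.mem_toFinset.mpr hu))
  obtain ⟨w, hw, hwi⟩ := Finset.mem_image.mp (F.min'_mem hne)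
  rw [← hi] at hwi
  have hv : σ i ∈ c.support := by
    rw [← hwi]
    simpa using List.mem_toFinset.mp hw
  have hcyc := hc.1
  set c₂ := c.rotate _ hv with hc2
  have hc₂cyc : c₂.IsCycle := hcyc.rotate hv
  have hmemsup : ∀ u, u ∈ c₂.support ↔ u ∈ c.support := by
    intro u
    rw [closed_mem_support_iff hc₂cyc.ne_nil, closed_mem_support_iff hcyc.ne_nil,
      (Walk.support_rotate c _ hv).mem_iff]
  have hmemedg : ∀ e, e ∈ c₂.edges ↔ e ∈ c.edges := fun e =>
    (Walk.rotate_edges c _ hv).mem_iff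
  have hlen2 : c₂.length = c.length := by
    have h1 := (Walk.rotate_darts c _ hv).perm.length_eq
    rwa [Walk.length_darts, Walk.length_darts] at h1
  have hc₂ : IsInducedCycle G c₂ :=
    ⟨hc₂cyc, fun u w hu hw ha => (hmemedg _).mpr
      (hc.2 u w ((hmemsup u).mp hu) ((hmemsup w).mp hw) ha)⟩
  have hsub : ∀ u ∈ c₂.support, u ∈ laterSet σ i := fun u hu =>
    hmin u ((hmemsup u).mp hu)
  have hvS : σ i ∈ laterSet σ i := by simp [laterSet]
  have hsimp : SimpC2 (G.induce (laterSet σ i)) k ⟨σ i, hvS⟩ := (hσ i).2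
  rw [← hlen2]
  exact key hk hvS hsimp c₂ hc₂ hsub
end

section
/- For an integer k ≥ 3, a graph G is k-chordal if and only if it admits a k-simplicial ordering of its vertices. -/
open SimpleGraph

variable {V : Type*}

namespace KCP

lemma path_loop_eq_nil {G : SimpleGraph V} {x : V} {p : G.Walk x x} (hp : p.IsPath) :
    p = Walk.nil := by
  cases p with
  | nil => rfl
  | cons h q =>
    exfalso
    have h1 := hp.support_nodup
    rw [Walk.support_cons] at h1
    exact (List.nodup_cons.1 h1).1 q.end_mem_support

lemma edge_mem_of_length_one {G : SimpleGraph V} {x y : V} {p : G.Walk x y}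
    (h : p.length = 1) : s(x, y) ∈ p.edges := by
  cases p with
  | nil => simp at h
  | cons hadj q =>
    rw [Walk.length_cons] at h
    have h0 : q.length = 0 := by omega
    have := Walk.eq_of_length_eq_zero h0
    subst this
    simp

lemma exists_induced_path {G : SimpleGraph V} :
    ∀ (n : ℕ) {x y : V} (p : G.Walk x y), p.length ≤ n →
      ∃ q : G.Walk x y, q.length ≤ p.length ∧ IsInducedPath G q := by
  classical
  intro n
  induction n using Nat.strong_induction_on with
  | _ n ih =>
    intro x y p hpn
    set p₁ := p.bypass with hp₁
    have hp₁path : p₁.IsPath := p.bypass_isPath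
    have hp₁len : p₁.length ≤ p.length := p.length_bypass_le
    by_cases hind : ∀ u w : V, u ∈ p₁.support → w ∈ p₁.support → G.Adj u w → s(u, w) ∈ p₁.edges
    · exact ⟨p₁, hp₁len, hp₁path, hind⟩
    push_neg at hind
    obtain ⟨u, w, hu, hw, huw, hne⟩ := hind
    have key : ∀ {a b : V} (t : G.Walk a b), a ≠ b → s(a, b) ∉ p₁.edges →
        (∀ e ∈ t.edges, e ∈ p₁.edges) → 2 ≤ t.length := by
      intro a b t hab hnab hsub
      by_contra hlt
      push_neg at hlt
      have : t.length = 0 ∨ t.length = 1 := by omega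
      rcases this with h0 | h1
      · exact hab (Walk.eq_of_length_eq_zero h0)
      · exact hnab (hsub _ (edge_mem_of_length_one h1))
    obtain ⟨q₂, hq₂⟩ : ∃ q₂ : G.Walk x y, q₂.length < p₁.length := by
      by_cases hwd : w ∈ (p₁.dropUntil u hu).support
      · refine ⟨(p₁.takeUntil u hu).append
          (Walk.cons huw ((p₁.dropUntil u hu).dropUntil w hwd)), ?_⟩
        have hs1 : p₁.length = (p₁.takeUntil u hu).length + (p₁.dropUntil u hu).length := by
          conv_lhs => rw [← p₁.take_spec hu]
          rw [Walk.length_append]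
        have hs2 : (p₁.dropUntil u hu).length =
            ((p₁.dropUntil u hu).takeUntil w hwd).length +
            ((p₁.dropUntil u hu).dropUntil w hwd).length := by
          conv_lhs => rw [← (p₁.dropUntil u hu).take_spec hwd]
          rw [Walk.length_append]
        have h2 : 2 ≤ ((p₁.dropUntil u hu).takeUntil w hwd).length := by
          refine key _ huw.ne hne (fun e he => ?_)
          exact (p₁.edges_dropUntil_subset hu) ((( p₁.dropUntil u hu).edges_takeUntil_subset hwd) he)
        rw [Walk.length_append, Walk.length_cons]
        omega
      · have hwt : w ∈ (p₁.takeUntil u hu).support := by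
          have := hw
          rw [← p₁.take_spec hu, Walk.mem_support_append_iff] at this
          tauto
        refine ⟨((p₁.takeUntil u hu).takeUntil w hwt).append
          (Walk.cons huw.symm (p₁.dropUntil u hu)), ?_⟩
        have hs1 : p₁.length = (p₁.takeUntil u hu).length + (p₁.dropUntil u hu).length := by
          conv_lhs => rw [← p₁.take_spec hu]
          rw [Walk.length_append]
        have hs2 : (p₁.takeUntil u hu).length =
            ((p₁.takeUntil u hu).takeUntil w hwt).length +
            ((p₁.takeUntil u hu).dropUntil w hwt).length := by
          conv_lhs => rw [← (p₁.takeUntil u hu).take_spec hwt]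
          rw [Walk.length_append]
        have h2 : 2 ≤ ((p₁.takeUntil u hu).dropUntil w hwt).length := by
          refine key _ huw.ne' (by rwa [Sym2.eq_swap]) (fun e he => ?_)
          exact (p₁.edges_takeUntil_subset hu) (((p₁.takeUntil u hu).edges_dropUntil_subset hwt) he)
        rw [Walk.length_append, Walk.length_cons]
        omega
    have hlt : q₂.length < n := lt_of_lt_of_le hq₂ (le_trans hp₁len hpn)
    obtain ⟨q, hq, hqI⟩ := ih q₂.length hlt q₂ le_rfl
    exact ⟨q, by omega, hqI⟩

lemma cycle_bound {G : SimpleGraph V} {k : ℕ} (hG : KChordal G k) (hk : 3 ≤ k)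
    {v x y : V} (hvx : G.Adj v x) (hvy : G.Adj v y) (hxy : ¬ G.Adj x y) (hne : x ≠ y)
    (p : G.Walk x y) (hp : IsInducedPath G p) (hv : v ∉ p.support)
    (hN : ∀ u ∈ p.support, u ≠ x → u ≠ y → ¬ G.Adj v u) :
    p.length ≤ k - 2 := by
  have hq : (p.concat hvy.symm).IsPath := by
    rw [← Walk.isPath_reverse_iff, Walk.reverse_concat, Walk.cons_isPath_iff]
    exact ⟨(Walk.isPath_reverse_iff p).2 hp.1, by
      rwa [Walk.support_reverse, List.mem_reverse]⟩
  have hvq : s(v, x) ∉ (p.concat hvy.symm).edges := by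
    simp only [Walk.edges_concat, List.concat_eq_append, List.mem_append, List.mem_singleton]
    rintro (hmem | hmem)
    · exact hv (p.fst_mem_support_of_mem_edges hmem)
    · rw [Sym2.eq_iff] at hmem
      rcases hmem with ⟨h1, _⟩ | ⟨_, h2⟩
      · exact hvy.ne h1
      · exact hne h2
  set c : G.Walk v v := Walk.cons hvx (p.concat hvy.symm) with hc
  have hcyc : c.IsCycle := (Walk.cons_isCycle_iff _ _).2 ⟨hq, hvq⟩
  have hsupp : ∀ z, z ∈ c.support → z = v ∨ z ∈ p.support := by
    intro z hz
    rw [hc, Walk.support_cons, List.mem_cons] at hz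
    rcases hz with rfl | hz
    · exact Or.inl rfl
    · rw [Walk.support_concat, List.mem_append,
        List.mem_singleton] at hz
      tauto
  have hedge : ∀ z, z ∈ p.support → G.Adj v z → s(v, z) ∈ c.edges := by
    intro z hz hadj
    have hzxy : z = x ∨ z = y := by
      by_contra hcon
      push_neg at hcon
      exact hN z hz hcon.1 hcon.2 hadj
    rw [hc, Walk.edges_cons, Walk.edges_concat, List.concat_eq_append]
    rcases hzxy with rfl | rfl
    · simp
    · simp [Sym2.eq_swap]
  have hcind : IsInducedCycle G c := by
    refine ⟨hcyc, fun a b ha hb hab => ?_⟩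
    rcases hsupp a ha with rfl | ha'
    · rcases hsupp b hb with rfl | hb'
      · exact absurd hab (G.irrefl)
      · exact hedge b hb' hab
    · rcases hsupp b hb with rfl | hb'
      · rw [Sym2.eq_swap]; exact hedge a ha' hab.symm
      · have := hp.2 a b ha' hb' hab
        rw [hc, Walk.edges_cons, Walk.edges_concat, List.concat_eq_append]
        simp only [List.mem_cons, List.mem_append, List.mem_singleton]
        tauto
  have hlen := hG c hcind
  rw [hc, Walk.length_cons, Walk.length_concat] at hlen
  omega

lemma simpC2_all {G : SimpleGraph V} {k : ℕ} (hG : KChordal G k) (hk : 3 ≤ k) (v : V) :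
    SimpC2 G k v := by
  intro x y hvx hvy hxy hne p hp hint
  have hvp : v ∉ p.support := by
    intro hv
    exact (hint v ⟨hv, hvx.ne, hvy.ne⟩).1 rfl
  refine cycle_bound hG hk hvx hvy hxy hne p hp hvp ?_
  intro u hu hux huy hadj
  exact (hint u ⟨hu, hux, huy⟩).2 hadj


universe u

def homOfLe {G : SimpleGraph V} {s t : Set V} (h : s ⊆ t) : G.induce s →g G.induce t :=
  ⟨fun u => ⟨u.1, h u.2⟩, fun {a b} hab => hab⟩

@[reducible] def homVal {G : SimpleGraph V} {s : Set V} : G.induce s →g G :=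
  ⟨Subtype.val, fun {a b} hab => hab⟩

lemma kchordal_induce {G : SimpleGraph V} {k : ℕ} (hG : KChordal G k) (s : Set V) :
    KChordal (G.induce s) k := by
  intro v c hc
  have hinj : Function.Injective (homVal (G := G) (s := s)) := Subtype.val_injective
  have hcyc : (c.map homVal).IsCycle := (Walk.map_isCycle_iff_of_injective hinj).2 hc.1
  have hind : IsInducedCycle G (c.map homVal) := by
    refine ⟨hcyc, fun a b ha hb hab => ?_⟩
    rw [Walk.support_map] at ha hb
    obtain ⟨a₀, ha₀, rfl⟩ := List.mem_map.1 ha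
    obtain ⟨b₀, hb₀, rfl⟩ := List.mem_map.1 hb
    have hmem : s(a₀, b₀) ∈ c.edges := hc.2 a₀ b₀ ha₀ hb₀ hab
    rw [Walk.edges_map]
    exact List.mem_map_of_mem hmem
  have hl := hG _ hind
  rwa [Walk.length_map] at hl

lemma connected_insert {G : SimpleGraph V} {A : Set V} (hA : (G.induce A).Connected)
    {a s : V} (ha : a ∈ A) (hadj : G.Adj a s) :
    (G.induce (insert s A)).Connected := by
  rw [connected_iff]
  refine ⟨?_, ⟨⟨s, Set.mem_insert _ _⟩⟩⟩
  have key : ∀ z : ↥(insert s A), (G.induce (insert s A)).Reachable z ⟨s, Set.mem_insert _ _⟩ := by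
    rintro ⟨z, hz⟩
    rcases Set.mem_insert_iff.1 hz with rfl | hz'
    · exact Reachable.refl _
    · have r : (G.induce A).Reachable ⟨z, hz'⟩ ⟨a, ha⟩ := hA.preconnected _ _
      have r' := r.map (homOfLe (G := G) (Set.subset_insert s A))
      refine r'.trans (Adj.reachable ?_)
      exact hadj
  intro z w
  exact (key z).trans (key w).symm

lemma exists_simpC1 {k : ℕ} (hk : 3 ≤ k) :
    ∀ (n : ℕ) (W : Type u) [Fintype W] (H : SimpleGraph W), Nonempty W →
      Fintype.card W ≤ n → KChordal H k → ∃ v, SimpC1 H k v := by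
  intro n
  induction n with
  | zero =>
    intro W _ H hne hcard _
    exact absurd hcard (by haveI := hne; have := Fintype.card_pos (α := W); omega)
  | succ n ih =>
    intro W _W H hne hcard hch
    classical
    by_cases hcomp : ∀ a b : W, a ≠ b → H.Adj a b
    · obtain ⟨v⟩ := hne
      refine ⟨v, ?_⟩
      intro x y hvx hvy hxy
      refine ⟨hvx.ne', hvy.ne', Walk.cons (by exact hcomp x y hxy) Walk.nil, ?_⟩
      show 1 ≤ k - 2
      omega
    · push_neg at hcomp
      obtain ⟨u0, w0, hne0, hnadj0⟩ := hcomp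
      have hCND : ConnNonDom H {u0} := by
        constructor
        · rw [connected_iff]
          refine ⟨?_, ⟨⟨u0, rfl⟩⟩⟩
        /- preconnected on singleton -/
          rintro ⟨a, rfl⟩ ⟨b, rfl⟩
          exact Reachable.refl _
        · intro hU
          have hmem : w0 ∈ closedNbhd H {u0} := hU ▸ Set.mem_univ w0
          rcases (Set.mem_union _ _ _).1 hmem with h | hs0
          · exact hne0 (Set.mem_singleton_iff.1 h).symm
          obtain ⟨h1, a, ha, h2⟩ :
              w0 ∉ ({u0} : Set W) ∧ ∃ a ∈ ({u0} : Set W), H.Adj a w0 := hs0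
          rw [Set.mem_singleton_iff] at ha
          subst ha
          exact hnadj0 h2
      obtain ⟨A, hACND, hAmax⟩ :
          ∃ A, ConnNonDom H A ∧ ∀ A', A ⊆ A' → ConnNonDom H A' → A' = A := by
        obtain ⟨A, hA, hmax⟩ := Set.Finite.exists_maximalFor id {A : Set W | ConnNonDom H A}
          (Set.toFinite _) ⟨{u0}, hCND⟩
        exact ⟨A, hA, fun A' hsub hA' => Set.Subset.antisymm (hmax hA' hsub) hsub⟩
      have hAconn := hACND.1
      have hAne : A.Nonempty := by
        obtain ⟨⟨a, ha⟩⟩ := hAconn.nonempty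
        exact ⟨a, ha⟩
      have hAsub : A ⊆ closedNbhd H A := Set.subset_union_left
      have hSsub : setNbhd H A ⊆ closedNbhd H A := Set.subset_union_right
      have hSB : ∀ s ∈ setNbhd H A, ∀ b, b ∉ closedNbhd H A → H.Adj s b := by
        intro s hs b hb
        obtain ⟨hsA, a, haA, has⟩ := hs
        have hconn' : (H.induce (insert s A)).Connected := connected_insert hAconn haA has
        have hne' : insert s A ≠ A := fun h => hsA (h ▸ Set.mem_insert s A)
        have hdom : closedNbhd H (insert s A) = Set.univ := by
          by_contra hcon
          exact hne' (hAmax _ (Set.subset_insert s A) ⟨hconn', hcon⟩)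
        have hbmem : b ∈ closedNbhd H (insert s A) := hdom ▸ Set.mem_univ b
        rcases (Set.mem_union _ _ _).1 hbmem with h | hbs
        · rcases Set.mem_insert_iff.1 h with rfl | h'
          · exact absurd (hSsub (show b ∈ setNbhd H A from ⟨hsA, a, haA, has⟩)) hb
          · exact absurd (hAsub h') hb
        obtain ⟨hbn, a', ha', hadj⟩ :
            b ∉ insert s A ∧ ∃ a ∈ insert s A, H.Adj a b := hbs
        rcases Set.mem_insert_iff.1 ha' with rfl | ha''
        · exact hadj
        · exact absurd
            (Set.mem_union_right _ (show b ∈ setNbhd H A from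
              ⟨fun hbA => hb (hAsub hbA), a', ha'', hadj⟩)) hb
      set B : Set W := (closedNbhd H A)ᶜ with hB
      have hBne : B.Nonempty := Set.nonempty_compl.2 hACND.2
      haveI : Fintype ↥B := Fintype.ofFinite _
      have hcardB : Fintype.card ↥B ≤ n := by
        have hlt : Fintype.card ↥B < Fintype.card W := by
          obtain ⟨a, haA⟩ := hAne
          apply Fintype.card_lt_of_injective_of_notMem
            (Subtype.val : ↥B → W) Subtype.val_injective (b := a)
          rintro ⟨⟨b', hb'⟩, rfl⟩
          exact hb' (hAsub haA)
        omega
      haveI hBne' : Nonempty ↥B := hBne.to_subtype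
      obtain ⟨v₀, hv₀⟩ := ih ↥B (H.induce B) hBne' hcardB (kchordal_induce hch B)
      refine ⟨(v₀ : W), ?_⟩
      have hv₀nc : (v₀ : W) ∉ closedNbhd H A := v₀.2
      have hnb : ∀ z, H.Adj (v₀ : W) z → z ∈ setNbhd H A ∨ z ∈ B := by
        intro z hz
        by_cases hzB : z ∈ B
        · exact Or.inr hzB
        · left
          have hzc : z ∈ closedNbhd H A := not_not.1 hzB
          rcases (Set.mem_union _ _ _).1 hzc with hzA | hzS
          · exact absurd (Set.mem_union_right _ (show (v₀ : W) ∈ setNbhd H A from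
              ⟨fun hvA => hv₀nc (hAsub hvA), z, hzA, hz.symm⟩)) hv₀nc
          · exact hzS
      intro x y hvx hvy hxy
      refine ⟨hvx.ne', hvy.ne', ?_⟩
      by_cases hadjxy : H.Adj x y
      · refine ⟨Walk.cons (by exact hadjxy) Walk.nil, ?_⟩
        show 1 ≤ k - 2
        omega
      rcases hnb x hvx with hxS | hxB
      · rcases hnb y hvy with hyS | hyB
        · -- x, y ∈ S : path through A plus cycle bound
          obtain ⟨hxA, ax, haxA, haxx⟩ := hxS
          obtain ⟨hyA, ay, hayA, hayy⟩ := hyS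
          set T : Set W := insert x (insert y A) with hT
          have hxT : x ∈ T := Set.mem_insert _ _
          have hyT : y ∈ T := Set.mem_insert_of_mem _ (Set.mem_insert _ _)
          have hAT : A ⊆ T := fun z hz => Set.mem_insert_of_mem _ (Set.mem_insert_of_mem _ hz)
          have hreach : (H.induce T).Reachable ⟨x, hxT⟩ ⟨y, hyT⟩ := by
            have r1 : (H.induce T).Adj ⟨x, hxT⟩ ⟨ax, hAT haxA⟩ := haxx.symm
            have r2 : (H.induce T).Adj ⟨ay, hAT hayA⟩ ⟨y, hyT⟩ := hayy
            have rA : (H.induce A).Reachable ⟨ax, haxA⟩ ⟨ay, hayA⟩ := hAconn.preconnected _ _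
            have rA' := rA.map (homOfLe (G := H) hAT)
            exact (r1.reachable.trans rA').trans r2.reachable
          obtain ⟨p₀⟩ := hreach
          obtain ⟨q, -, hqI⟩ := exists_induced_path p₀.length p₀ le_rfl
          have hqsub : ∀ z : ↥T, (z : W) ≠ x → (z : W) ≠ y → (z : W) ∈ A := by
            intro z hzx hzy
            rcases Set.mem_insert_iff.1 z.2 with h | h
            · exact absurd h hzx
            · rcases Set.mem_insert_iff.1 h with h' | h'
              · exact absurd h' hzy
              · exact h'
          have hvT : ∀ z : ↥T, (z : W) ≠ (v₀ : W) := by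
            intro z h
            rcases Set.mem_insert_iff.1 z.2 with h1 | h1
            · exact hvx.ne' (h1.symm.trans h)
            · rcases Set.mem_insert_iff.1 h1 with h2 | h2
              · exact hvy.ne' (h2.symm.trans h)
              · exact hv₀nc (hAsub (h ▸ h2))
          have hmapI : IsInducedPath H (q.map homVal) := by
            refine ⟨(Walk.map_isPath_iff_of_injective Subtype.val_injective).2 hqI.1, ?_⟩
            intro a b ha hb hab
            rw [Walk.support_map] at ha hb
            obtain ⟨a₀, ha₀, rfl⟩ := List.mem_map.1 ha
            obtain ⟨b₀, hb₀, rfl⟩ := List.mem_map.1 hb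
            have hmem : s(a₀, b₀) ∈ q.edges := hqI.2 a₀ b₀ ha₀ hb₀ hab
            rw [Walk.edges_map]
            exact List.mem_map_of_mem hmem
          have hvnot : (v₀ : W) ∉ (q.map homVal).support := by
            rw [Walk.support_map]
            intro h
            obtain ⟨z, hz, hzv⟩ := List.mem_map.1 h
            exact hvT z hzv
          have hNint : ∀ z ∈ (q.map homVal).support, z ≠ x → z ≠ y → ¬ H.Adj (v₀ : W) z := by
            intro z hz hzx hzy hadj
            rw [Walk.support_map] at hz
            obtain ⟨z₀, hz₀, rfl⟩ := List.mem_map.1 hz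
            have hzA : (z₀ : W) ∈ A := hqsub z₀ hzx hzy
            exact hv₀nc (Set.mem_union_right _ (show (v₀ : W) ∈ setNbhd H A from
              ⟨fun h => hv₀nc (hAsub h), _, hzA, hadj.symm⟩))
          have hlen := cycle_bound hch hk hvx hvy hadjxy hxy (q.map homVal) hmapI hvnot hNint
          rw [Walk.length_map] at hlen
          let F₂ : H.induce T →g H.induce {u : W | u ≠ (v₀ : W)} :=
            ⟨fun z => ⟨(z : W), hvT z⟩, fun {a b} hab => hab⟩
          exact ⟨q.map F₂, by rwa [Walk.length_map]⟩
        · exact absurd (hSB x hxS _ hyB) hadjxy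
      · rcases hnb y hvy with hyS | hyB
        · exact absurd ((hSB y hyS _ hxB).symm) hadjxy
        · -- x, y ∈ B : use induction hypothesis
          have hxy' : (⟨x, hxB⟩ : ↥B) ≠ ⟨y, hyB⟩ := fun h => hxy (congrArg Subtype.val h)
          obtain ⟨hx', hy', p, hplen⟩ := hv₀ ⟨x, hxB⟩ ⟨y, hyB⟩ (by exact hvx) (by exact hvy) hxy'
          let F : (H.induce B).induce {u : ↥B | u ≠ v₀} →g H.induce {u : W | u ≠ (v₀ : W)} :=
            ⟨fun z => ⟨((z : ↥B) : W), fun h => z.2 (Subtype.ext h)⟩, fun {a b} hab => hab⟩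
          exact ⟨p.map F, by rwa [Walk.length_map]⟩


lemma ksimplicial_transfer {V₁ : Type*} {V₂ : Type*} {G₁ : SimpleGraph V₁}
    {G₂ : SimpleGraph V₂} (e : V₁ ≃ V₂) (he : ∀ a b, G₁.Adj a b ↔ G₂.Adj (e a) (e b))
    {k : ℕ} {v : V₁} (h : KSimplicial G₁ k v) : KSimplicial G₂ k (e v) := by
  obtain ⟨h1, h2⟩ := h
  constructor
  · intro x y hx hy hxy
    have hx' : G₁.Adj v (e.symm x) := (he _ _).2 (by rw [e.apply_symm_apply]; exact hx)
    have hy' : G₁.Adj v (e.symm y) := (he _ _).2 (by rw [e.apply_symm_apply]; exact hy)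
    have hxy' : e.symm x ≠ e.symm y := fun hcon => hxy (by
      rw [← e.apply_symm_apply x, ← e.apply_symm_apply y]; exact congrArg e hcon)
    obtain ⟨ha, hb, p, hplen⟩ := h1 _ _ hx' hy' hxy'
    refine ⟨hx.ne', hy.ne', ?_⟩
    let F : G₁.induce {u : V₁ | u ≠ v} →g G₂.induce {u : V₂ | u ≠ e v} :=
      ⟨fun z => ⟨e (z : V₁), fun hcon => z.2 (e.injective hcon)⟩,
        fun {a b} hab => (he _ _).1 hab⟩
    refine ⟨(p.map F).copy (Subtype.ext (e.apply_symm_apply x))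
      (Subtype.ext (e.apply_symm_apply y)), ?_⟩
    rw [Walk.length_copy, Walk.length_map]
    exact hplen
  · intro x y hx hy hnadj hxy p hp hint
    let F : G₂ →g G₁ := ⟨fun z => e.symm z, fun {a b} hab => (he _ _).2 (by
      rw [e.apply_symm_apply, e.apply_symm_apply]; exact hab)⟩
    have hinj : Function.Injective F := fun a b hab => e.symm.injective hab
    set p' : G₁.Walk (e.symm x) (e.symm y) := p.map F with hp'
    have hx' : G₁.Adj v (e.symm x) := (he _ _).2 (by rw [e.apply_symm_apply]; exact hx)
    have hy' : G₁.Adj v (e.symm y) := (he _ _).2 (by rw [e.apply_symm_apply]; exact hy)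
    have hnadj' : ¬ G₁.Adj (e.symm x) (e.symm y) := fun hcon => hnadj (by
      have h3 : G₂.Adj (e (e.symm x)) (e (e.symm y)) := (he _ _).1 hcon
      rwa [e.apply_symm_apply, e.apply_symm_apply] at h3)
    have hxy' : e.symm x ≠ e.symm y := fun hcon => hxy (by
      rw [← e.apply_symm_apply x, ← e.apply_symm_apply y]; exact congrArg e hcon)
    have hpI : IsInducedPath G₁ p' := by
      refine ⟨(Walk.map_isPath_iff_of_injective hinj).2 hp.1, ?_⟩
      intro a b ha hb hab
      rw [hp', Walk.support_map] at ha hb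
      obtain ⟨a₀, ha₀, rfl⟩ := List.mem_map.1 ha
      obtain ⟨b₀, hb₀, rfl⟩ := List.mem_map.1 hb
      have hab' : G₂.Adj a₀ b₀ := by
        have h3 : G₂.Adj (e (e.symm a₀)) (e (e.symm b₀)) := (he _ _).1 hab
        rwa [e.apply_symm_apply, e.apply_symm_apply] at h3
      have hmem := hp.2 a₀ b₀ ha₀ hb₀ hab'
      rw [hp', Walk.edges_map]
      exact List.mem_map_of_mem hmem
    have hint' : ∀ u, InternalVert G₁ p' u → u ≠ v ∧ ¬ G₁.Adj v u := by
      intro z hz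
      obtain ⟨hzs, hzx, hzy⟩ := hz
      rw [hp', Walk.support_map] at hzs
      obtain ⟨z₀, hz₀, rfl⟩ := List.mem_map.1 hzs
      have hz₀x : z₀ ≠ x := fun hcon => hzx (by subst hcon; rfl)
      have hz₀y : z₀ ≠ y := fun hcon => hzy (by subst hcon; rfl)
      obtain ⟨hz1, hz2⟩ := hint z₀ ⟨hz₀, hz₀x, hz₀y⟩
      refine ⟨fun hcon => hz1 (e.symm_apply_eq.1 (show e.symm z₀ = v from hcon)),
        fun hcon => hz2 ?_⟩
      have h3 : G₂.Adj (e v) (e (e.symm z₀)) := (he _ _).1 hcon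
      rwa [e.apply_symm_apply] at h3
    have hfin := h2 _ _ hx' hy' hnadj' hxy' p' hpI hint'
    rwa [hp', Walk.length_map] at hfin

def optNe {W : Type u} (v : W) [DecidableEq W] : Option (↥{u : W | u ≠ v}) ≃ W where
  toFun o := o.elim v Subtype.val
  invFun w := if h : w = v then none else some ⟨w, h⟩
  left_inv o := by
    cases o with
    | none => simp
    | some u =>
      have h : (u : W) ≠ v := u.2
      simp [h]
  right_inv w := by
    by_cases h : w = v <;> simp [h]

@[simp] lemma optNe_none {W : Type u} (v : W) [DecidableEq W] : optNe v none = v := rfl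

@[simp] lemma optNe_some {W : Type u} (v : W) [DecidableEq W] (u : ↥{u : W | u ≠ v}) :
    optNe v (some u) = (u : W) := rfl

@[simp] lemma optNe_symm_self {W : Type u} (v : W) [DecidableEq W] :
    (optNe v).symm v = none := by simp [optNe]

@[simp] lemma optNe_symm_ne {W : Type u} (v : W) [DecidableEq W] {w : W} (h : w ≠ v) :
    (optNe v).symm w = some ⟨w, h⟩ := by simp [optNe, h]

lemma build_order {k : ℕ} (hk : 3 ≤ k) :
    ∀ (n : ℕ) (W : Type u) [Fintype W] (H : SimpleGraph W),
      Fintype.card W ≤ n → KChordal H k →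
      ∃ σ : Fin (Fintype.card W) ≃ W, KSimplicialOrdering H k σ := by
  intro n
  induction n with
  | zero =>
    intro W _ H hcard _
    have h0 : Fintype.card W = 0 := by omega
    haveI : IsEmpty W := Fintype.card_eq_zero_iff.1 h0
    haveI : IsEmpty (Fin (Fintype.card W)) := by rw [h0]; infer_instance
    exact ⟨Equiv.equivOfIsEmpty _ _, fun i => isEmptyElim i⟩
  | succ n ih =>
    intro W _W H hcard hch
    classical
    by_cases h0 : Fintype.card W = 0
    · haveI : IsEmpty W := Fintype.card_eq_zero_iff.1 h0
      haveI : IsEmpty (Fin (Fintype.card W)) := by rw [h0]; infer_instance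
      exact ⟨Equiv.equivOfIsEmpty _ _, fun i => isEmptyElim i⟩
    haveI hne : Nonempty W := Fintype.card_pos_iff.1 (Nat.pos_of_ne_zero h0)
    obtain ⟨v, hv1⟩ := exists_simpC1 hk (n + 1) W H hne hcard hch
    have hv : KSimplicial H k v := ⟨hv1, simpC2_all hch hk v⟩
    haveI : Fintype ↥{u : W | u ≠ v} := Fintype.ofFinite _
    set e3 : Option ↥{u : W | u ≠ v} ≃ W := optNe v with he3
    have hm : Fintype.card W = Fintype.card ↥{u : W | u ≠ v} + 1 := by
      rw [← Fintype.card_option]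
      exact (Fintype.card_congr e3).symm
    have hcards : Fintype.card ↥{u : W | u ≠ v} ≤ n := by omega
    obtain ⟨σ', hσ'⟩ := ih ↥{u : W | u ≠ v} (H.induce {u : W | u ≠ v}) hcards (kchordal_induce hch {u : W | u ≠ v})
    set eOpt : Fin (Fintype.card W) ≃ Option (Fin (Fintype.card ↥{u : W | u ≠ v})) :=
      (finCongr hm).trans (finSuccEquiv (Fintype.card ↥{u : W | u ≠ v})) with heOpt
    set σ : Fin (Fintype.card W) ≃ W :=
      eOpt.trans ((Equiv.optionCongr σ').trans e3) with hσdef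
    have hsymm : ∀ w : W, σ.symm w =
        eOpt.symm ((Equiv.optionCongr σ'.symm) (e3.symm w)) := by
      intro w
      rw [hσdef]
      simp [Equiv.symm_trans_apply]
    have hvalA : ((σ.symm v : Fin (Fintype.card W)) : ℕ) = 0 := by
      rw [hsymm, he3, optNe_symm_self]
      rw [heOpt, Equiv.symm_trans_apply, Equiv.optionCongr_apply, Option.map_none, finSuccEquiv_symm_none]
      simp
    have hvalB : ∀ (w : W) (hw : w ≠ v),
        ((σ.symm w : Fin (Fintype.card W)) : ℕ) = ((σ'.symm ⟨w, hw⟩ : Fin _) : ℕ) + 1 := by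
      intro w hw
      rw [hsymm, he3, optNe_symm_ne v hw]
      rw [heOpt, Equiv.symm_trans_apply, Equiv.optionCongr_apply, Option.map_some, finSuccEquiv_symm_some]
      simp
    refine ⟨σ, ?_⟩
    intro i
    rcases Fin.eq_zero_or_eq_succ (finCongr hm i) with hi | ⟨j, hj⟩
    · -- first vertex
      have hival : (i : ℕ) = 0 := by
        have h' := congrArg Fin.val hi
        simpa using h'
      have hσi : σ i = v := by
        rw [hσdef, Equiv.trans_apply, Equiv.trans_apply, heOpt, Equiv.trans_apply, hi,
          finSuccEquiv_zero, he3]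
        rfl
      have hLuniv : ∀ w : W, w ∈ laterSet σ i := by
        intro w
        show i ≤ σ.symm w
        rw [Fin.le_def, hival]
        omega
      let e : W ≃ ↥(laterSet σ i) := (Equiv.subtypeUnivEquiv hLuniv).symm
      have he : ∀ a b : W, H.Adj a b ↔
          (H.induce (laterSet σ i)).Adj (e a) (e b) := fun a b => Iff.rfl
      have hres := ksimplicial_transfer e he hv
      have heq : e v = (⟨σ i, by simp [laterSet]⟩ : ↥(laterSet σ i)) :=
        Subtype.ext hσi.symm
      exact heq ▸ hres
    · -- later vertices
      have hival : (i : ℕ) = (j : ℕ) + 1 := by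
        have h' := congrArg Fin.val hj
        simpa using h'
      have hσi : σ i = ((σ' j : ↥{u : W | u ≠ v}) : W) := by
        rw [hσdef, Equiv.trans_apply, Equiv.trans_apply, heOpt, Equiv.trans_apply, hj,
          finSuccEquiv_succ, he3]
        rfl
      have hL : laterSet σ i = Subtype.val '' (laterSet σ' j) := by
        ext w
        constructor
        · intro hwL
          have hle : (i : ℕ) ≤ ((σ.symm w : Fin _) : ℕ) := Fin.le_def.1 hwL
          by_cases hwv : w = v
          · subst hwv
            rw [hvalA] at hle
            omega
          · refine ⟨⟨w, hwv⟩, ?_, rfl⟩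
            show j ≤ σ'.symm ⟨w, hwv⟩
            rw [Fin.le_def]
            have hb := hvalB w hwv
            omega
        · rintro ⟨⟨w', hw'⟩, hmem, rfl⟩
          show i ≤ σ.symm w'
          rw [Fin.le_def, hvalB w' hw', hival]
          have hb := Fin.le_def.1 hmem
          omega
      have hres := hσ' j
      let e : ↥(laterSet σ' j) ≃ ↥(laterSet σ i) :=
        (Equiv.Set.image Subtype.val (laterSet σ' j) Subtype.val_injective).trans
          (Equiv.setCongr hL.symm)
      have he : ∀ a b : ↥(laterSet σ' j),
          ((H.induce {u : W | u ≠ v}).induce (laterSet σ' j)).Adj a b ↔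
          (H.induce (laterSet σ i)).Adj (e a) (e b) := fun a b => Iff.rfl
      have hres2 := ksimplicial_transfer e he hres
      have heq : e ⟨σ' j, by simp [laterSet]⟩ =
          (⟨σ i, by simp [laterSet]⟩ : ↥(laterSet σ i)) := Subtype.ext hσi.symm
      exact heq ▸ hres2


lemma length_rotate {G : SimpleGraph V} [DecidableEq V] {v u : V} (c : G.Walk v v)
    (h : u ∈ c.support) : (c.rotate u h).length = c.length := by
  show ((c.dropUntil u h).append (c.takeUntil u h)).length = c.length
  rw [Walk.length_append]
  have h2 := congrArg Walk.length (c.take_spec h)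
  rw [Walk.length_append] at h2
  omega

lemma mem_support_iff_tail {G : SimpleGraph V} {v x : V} (c : G.Walk v v) (hc : ¬c.Nil) :
    x ∈ c.support ↔ x ∈ c.support.tail := by
  cases c with
  | nil => simp at hc
  | cons h q =>
    rw [Walk.support_cons]
    constructor
    · intro hx
      rcases List.mem_cons.1 hx with rfl | hx
      · simpa using q.end_mem_support
      · simpa using hx
    · intro hx
      exact List.mem_cons_of_mem _ (by simpa using hx)

lemma mem_support_rotate {G : SimpleGraph V} [DecidableEq V] {v u x : V} (c : G.Walk v v)
    (hc : c.IsCycle) (h : u ∈ c.support) : x ∈ (c.rotate u h).support ↔ x ∈ c.support := by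
  have h1 := Walk.support_rotate c u h
  have hnil : ¬c.Nil := hc.not_nil
  have hnil' : ¬(c.rotate u h).Nil := by
    rw [Walk.nil_iff_length_eq, length_rotate]
    have h3 := hc.three_le_length
    omega
  rw [mem_support_iff_tail _ hnil, mem_support_iff_tail _ hnil']
  exact h1.mem_iff

lemma path_ne_of_length_pos {G : SimpleGraph V} {a b : V} {p : G.Walk a b}
    (hp : p.IsPath) (h : 0 < p.length) : a ≠ b := by
  intro hcon
  subst hcon
  rw [path_loop_eq_nil hp] at h
  simp at h

def liftWalk {G : SimpleGraph V} {L : Set V} :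
    ∀ {a b : V} (p : G.Walk a b) (h : ∀ u ∈ p.support, u ∈ L),
      (G.induce L).Walk ⟨a, h a p.start_mem_support⟩ ⟨b, h b p.end_mem_support⟩
  | _, _, Walk.nil, _ => Walk.nil
  | _, _, Walk.cons hadj p, h =>
      Walk.cons (by exact hadj)
        (liftWalk p fun u hu => h u (by rw [Walk.support_cons]; exact List.mem_cons_of_mem _ hu))

lemma liftWalk_map {G : SimpleGraph V} {L : Set V} {a b : V} (p : G.Walk a b) :
    ∀ (h : ∀ u ∈ p.support, u ∈ L), (liftWalk p h).map homVal = p := by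
  induction p with
  | nil => intro h; rfl
  | cons hadj q ih =>
    intro h
    simp only [liftWalk, Walk.map_cons]
    exact congrArg (Walk.cons hadj) (ih _)

lemma kchordal_of_ordering {W : Type u} [Fintype W] (H : SimpleGraph W) {k : ℕ} (hk : 3 ≤ k)
    (σ : Fin (Fintype.card W) ≃ W) (hσ : KSimplicialOrdering H k σ) : KChordal H k := by
  classical
  intro v c hc
  by_contra hlen
  push_neg at hlen
  have hv : v ∈ c.support := c.start_mem_support
  have hFt : (c.support.toFinset.image σ.symm).Nonempty :=
    ⟨σ.symm v, Finset.mem_image_of_mem _ (List.mem_toFinset.2 hv)⟩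
  set i₀ := (c.support.toFinset.image σ.symm).min' hFt with hi₀
  obtain ⟨v₀, hv₀sup, hv₀eq⟩ : ∃ w, w ∈ c.support ∧ σ.symm w = i₀ := by
    have hmem := (c.support.toFinset.image σ.symm).min'_mem hFt
    rw [Finset.mem_image] at hmem
    obtain ⟨w, hw, hweq⟩ := hmem
    exact ⟨w, List.mem_toFinset.1 hw, hweq⟩
  have hmin : ∀ w ∈ c.support, i₀ ≤ σ.symm w := fun w hw =>
    Finset.min'_le _ _ (Finset.mem_image_of_mem _ (List.mem_toFinset.2 hw))
  have hσi₀ : σ i₀ = v₀ := by rw [← hv₀eq, Equiv.apply_symm_apply]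
  set d := c.rotate v₀ hv₀sup with hd
  have hdcyc : d.IsCycle := hc.1.rotate hv₀sup
  have hdlen : d.length = c.length := length_rotate c hv₀sup
  have hdsup : ∀ x, x ∈ d.support ↔ x ∈ c.support := fun x => mem_support_rotate c hc.1 hv₀sup
  have hded : ∀ e, e ∈ d.edges ↔ e ∈ c.edges := fun e => (Walk.rotate_edges c v₀ hv₀sup).mem_iff
  have hdind : ∀ a b, a ∈ d.support → b ∈ d.support → H.Adj a b → s(a, b) ∈ d.edges :=
    fun a b ha hb hab => (hded _).2 (hc.2 a b ((hdsup a).1 ha) ((hdsup b).1 hb) hab)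
  have hL : ∀ z ∈ d.support, z ∈ laterSet σ i₀ := fun z hz => hmin z ((hdsup z).1 hz)
  obtain ⟨q, hq⟩ : ∃ q : (H.induce (laterSet σ i₀)).Walk ⟨v₀, hL v₀ d.start_mem_support⟩
      ⟨v₀, hL v₀ d.end_mem_support⟩, q.map homVal = d := ⟨liftWalk d hL, liftWalk_map d hL⟩
  have hqcyc : q.IsCycle := by
    have hinjv : Function.Injective ⇑(homVal (G := H) (s := laterSet σ i₀)) :=
      Subtype.val_injective
    refine (Walk.map_isCycle_iff_of_injective hinjv).1 ?_
    rw [hq]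
    exact hdcyc
  have hqlen : q.length = c.length := by
    have h2 := congrArg Walk.length hq
    rw [Walk.length_map] at h2
    omega
  have hqsupmem : ∀ z : ↥(laterSet σ i₀), z ∈ q.support → (z : W) ∈ d.support := by
    intro z hz
    rw [← hq, Walk.support_map]
    exact List.mem_map_of_mem hz
  have hqind : ∀ a b, a ∈ q.support → b ∈ q.support →
      (H.induce (laterSet σ i₀)).Adj a b → s(a, b) ∈ q.edges := by
    intro a b ha hb hab
    have hmem : s((a : W), (b : W)) ∈ d.edges :=
      hdind _ _ (hqsupmem a ha) (hqsupmem b hb) hab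
    rw [← hq, Walk.edges_map] at hmem
    obtain ⟨e0, he0, he0eq⟩ := List.mem_map.1 hmem
    have hinj2 : Function.Injective
        (Sym2.map (homVal (G := H) (s := laterSet σ i₀))) :=
      Sym2.map.injective Subtype.val_injective
    have he0' : e0 = s(a, b) := hinj2 (by rw [he0eq, Sym2.map_pair_eq]; rfl)
    rwa [← he0']
  -- decompose q
  have hqnil : ¬ q.Nil := hqcyc.not_nil
  obtain ⟨xh, h₁, q₁, hq₁⟩ := Walk.not_nil_iff.1 hqnil
  have hq₁len : q₁.length + 1 = q.length := by rw [hq₁, Walk.length_cons]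
  have hq₁nil : ¬ q₁.Nil := by
    rw [Walk.nil_iff_length_eq]
    omega
  have hrnil : ¬ q₁.reverse.Nil := by
    rw [Walk.nil_iff_length_eq, Walk.length_reverse]
    rw [Walk.nil_iff_length_eq] at hq₁nil
    omega
  obtain ⟨yh, h₂, r₂, hr₂⟩ := Walk.not_nil_iff.1 hrnil
  set P := r₂.reverse with hP
  have hq₁eq : q₁ = P.concat h₂.symm := by
    rw [hP, Walk.concat_eq_append, ← Walk.reverse_cons, ← hr₂, Walk.reverse_reverse]
    exact h₂
  have hq₁len2 : q₁.length = P.length + 1 := by rw [hq₁eq, Walk.length_concat]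
  have hPlen2 : 2 ≤ P.length := by omega
  obtain ⟨hq₁path, hq₁edge⟩ : q₁.IsPath ∧ s(_, _) ∉ q₁.edges := by
    have h3 := hqcyc
    rw [hq₁] at h3
    exact (Walk.cons_isCycle_iff _ _).1 h3
  have hPpath : P.IsPath := by
    have h3 : q₁.reverse.IsPath := (Walk.isPath_reverse_iff _).2 hq₁path
    rw [hr₂] at h3
    exact (Walk.isPath_reverse_iff r₂).2 h3.of_cons
  have hxy : xh ≠ yh := path_ne_of_length_pos hPpath (by omega)
  have hvBP : (⟨v₀, hL v₀ d.end_mem_support⟩ : ↥(laterSet σ i₀)) ∉ P.support := by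
    have hnd := hq₁path.support_nodup
    rw [hq₁eq, Walk.support_concat, List.nodup_append] at hnd
    intro hmem
    exact hnd.2.2 _ hmem _ (List.mem_singleton.2 rfl) rfl
  have hvAB : (⟨v₀, hL v₀ d.start_mem_support⟩ : ↥(laterSet σ i₀)) =
      ⟨v₀, hL v₀ d.end_mem_support⟩ := Subtype.ext rfl
  have hvAP : (⟨v₀, hL v₀ d.start_mem_support⟩ : ↥(laterSet σ i₀)) ∉ P.support :=
    fun hmem => hvBP (hvAB ▸ hmem)
  have hPq : ∀ z, z ∈ P.support → z ∈ q.support := by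
    intro z hz
    rw [hq₁, Walk.support_cons]
    refine List.mem_cons_of_mem _ ?_
    rw [hq₁eq, Walk.support_concat]
    exact List.mem_append_left _ hz
  -- decompose q.edges
  have hqedges : q.edges = s(⟨v₀, hL v₀ d.start_mem_support⟩, xh) ::
      (P.edges ++ [s(yh, ⟨v₀, hL v₀ d.end_mem_support⟩)]) := by
    rw [hq₁, Walk.edges_cons, hq₁eq, Walk.edges_concat, List.concat_eq_append]
  have hPind : ∀ a b, a ∈ P.support → b ∈ P.support →
      (H.induce (laterSet σ i₀)).Adj a b → s(a, b) ∈ P.edges := by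
    intro a b ha hb hab
    have hedge := hqind a b (hPq a ha) (hPq b hb) hab
    rw [hqedges] at hedge
    rcases List.mem_cons.1 hedge with h' | h'
    · exfalso
      rw [Sym2.eq_iff] at h'
      rcases h' with ⟨ha', hb'⟩ | ⟨ha', hb'⟩
      · exact hvAP (ha' ▸ ha)
      · exact hvAP (hb' ▸ hb)
    · rcases List.mem_append.1 h' with h'' | h''
      · exact h''
      · exfalso
        rw [List.mem_singleton, Sym2.eq_iff] at h''
        rcases h'' with ⟨ha', hb'⟩ | ⟨ha', hb'⟩
        · exact hvBP (hb' ▸ hb)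
        · exact hvBP (ha' ▸ ha)
  have hnadj : ¬ (H.induce (laterSet σ i₀)).Adj xh yh := by
    intro hadj
    have hedge := hqind xh yh (hPq _ P.start_mem_support) (hPq _ P.end_mem_support) hadj
    rw [hqedges] at hedge
    rcases List.mem_cons.1 hedge with h' | h'
    · rw [Sym2.eq_iff] at h'
      rcases h' with ⟨ha', hb'⟩ | ⟨ha', hb'⟩
      · exact h₁.ne' ha'
      · exact h₂.ne' (hb'.trans hvAB)
    · rcases List.mem_append.1 h' with h'' | h''
      · -- edge of P between its endpoints
        have hPnil : ¬ P.Nil := by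
          rw [Walk.nil_iff_length_eq]
          omega
        obtain ⟨zh, h₃, P₂, hPc⟩ := Walk.not_nil_iff.1 hPnil
        rw [hPc, Walk.edges_cons] at h''
        rcases List.mem_cons.1 h'' with h3 | h3
        · rw [Sym2.eq_iff] at h3
          rcases h3 with ⟨ha', hb'⟩ | ⟨ha', hb'⟩
          · -- yh = zh : P₂ is a loop path hence nil, P.length = 1, contradiction
            have hP₂path : P₂.IsPath := by
              have h4 := hPpath
              rw [hPc] at h4
              exact h4.of_cons
            have hne2 : P₂.length = 0 := by
              subst hb'
              rw [path_loop_eq_nil hP₂path]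
              rfl
            have hlenP : P.length = P₂.length + 1 := by rw [hPc, Walk.length_cons]
            omega
          · exact hxy hb'.symm
        · have hxs : xh ∈ P₂.support := Walk.fst_mem_support_of_mem_edges P₂ h3
          have h4 := hPpath
          rw [hPc, Walk.cons_isPath_iff] at h4
          exact h4.2 hxs
      · rw [List.mem_singleton, Sym2.eq_iff] at h''
        rcases h'' with ⟨ha', hb'⟩ | ⟨ha', hb'⟩
        · exact hxy ha'
        · exact h₁.ne' (ha'.trans hvAB.symm)
  have hint : ∀ z, InternalVert (H.induce (laterSet σ i₀)) P z →
      z ≠ (⟨v₀, hL v₀ d.start_mem_support⟩ : ↥(laterSet σ i₀)) ∧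
      ¬ (H.induce (laterSet σ i₀)).Adj ⟨v₀, hL v₀ d.start_mem_support⟩ z := by
    rintro z ⟨hzs, hzx, hzy⟩
    have hzvA : z ≠ ⟨v₀, hL v₀ d.start_mem_support⟩ := fun hcon => hvAP (hcon ▸ hzs)
    refine ⟨hzvA, fun hadj => ?_⟩
    have hedge := hqind _ z q.start_mem_support (hPq z hzs) hadj
    rw [hqedges] at hedge
    rcases List.mem_cons.1 hedge with h' | h'
    · rw [Sym2.eq_iff] at h'
      rcases h' with ⟨ha', hb'⟩ | ⟨ha', hb'⟩
      · exact hzx hb'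
      · exact h₁.ne ha'
    · rcases List.mem_append.1 h' with h'' | h''
      · exact hvAP (Walk.fst_mem_support_of_mem_edges P h'')
      · rw [List.mem_singleton, Sym2.eq_iff] at h''
        rcases h'' with ⟨ha', hb'⟩ | ⟨ha', hb'⟩
        · exact hzvA (hb'.trans hvAB.symm)
        · exact hzy hb'
  have hC2 : SimpC2 (H.induce (laterSet σ i₀)) k
      (⟨v₀, hL v₀ d.start_mem_support⟩ : ↥(laterSet σ i₀)) := by
    have h3 := (hσ i₀).2
    convert h3 using 2
    exact Subtype.ext hσi₀.symm
  have hfinal := hC2 xh yh h₁ h₂ hnadj hxy P ⟨hPpath, hPind⟩ hint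
  omega


end KCP

theorem stmt11 [Fintype V] (G : SimpleGraph V) (k : ℕ) (hk : 3 ≤ k) :
    KChordal G k ↔ ∃ σ : Fin (Fintype.card V) ≃ V, KSimplicialOrdering G k σ := by
  constructor
  · intro hG
    exact KCP.build_order hk (Fintype.card V) V G le_rfl hG
  · rintro ⟨σ, hσ⟩
    exact KCP.kchordal_of_ordering G hk σ hσ
end

section
/- Let k ≥ 3. If G is k-chordal, then for every minimal vertex separator S of G, for every non-adjacent pair x, y ∈ S, and for any two distinct connected components S_i, S_j of G − S, every pair of induced x–y paths P and P' with all internal vertices in S_i and S_j respectively satisfies ||P|| + ||P'|| ≤ k. -/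
open SimpleGraph

variable {V : Type*}

theorem stmt12 [Fintype V] (G : SimpleGraph V) (k : ℕ) (hk : 3 ≤ k)
    (hch : KChordal G k) (S : Set V) (hS : IsMinVertexSeparator G S)
    (x y : V) (hxS : x ∈ S) (hyS : y ∈ S) (hxy : x ≠ y) (hnadj : ¬ G.Adj x y)
    (c c' : (G.induce Sᶜ).ConnectedComponent) (hcc : c ≠ c')
    (P P' : G.Walk x y) (hP : IsInducedPath G P) (hP' : IsInducedPath G P')
    (hPint : ∀ u : V, InternalVert G P u → InComponent G S c u)
    (hP'int : ∀ u : V, InternalVert G P' u → InComponent G S c' u) :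
    P.length + P'.length ≤ k := by
  classical
  -- same vertex internal to both paths is impossible
  have hmemboth : ∀ a : V, a ∈ P.support → a ∈ P'.support → a = x ∨ a = y := by
    intro a ha ha'
    by_contra h
    push_neg at h
    obtain ⟨h1, h2⟩ := h
    obtain ⟨hu1, hu2⟩ := hPint a ⟨ha, h1, h2⟩
    obtain ⟨hw1, hw2⟩ := hP'int a ⟨ha', h1, h2⟩
    exact hcc (hu2 ▸ hw2 ▸ rfl)
  -- no adjacency between internal vertices of P and P'
  have hnoadj : ∀ u w : V, InternalVert G P u → InternalVert G P' w → ¬ G.Adj u w := by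
    intro u w hu hw hadj
    obtain ⟨hu1, hu2⟩ := hPint u hu
    obtain ⟨hw1, hw2⟩ := hP'int w hw
    have hadj' : (G.induce Sᶜ).Adj ⟨u, hu1⟩ ⟨w, hw1⟩ := by
      simp only [comap_adj, Function.Embedding.coe_subtype]
      exact hadj
    exact hcc (by rw [← hu2, ← hw2]; exact ConnectedComponent.sound hadj'.reachable)
  set C : G.Walk x x := P.append P'.reverse with hC
  have hPlen : P.length ≠ 0 := fun h => hxy (SimpleGraph.Walk.eq_of_length_eq_zero h)
  have hxP : x ∈ P.support := P.start_mem_support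
  have hyP : y ∈ P.support := P.end_mem_support
  have hxP' : x ∈ P'.support := P'.start_mem_support
  have hyP' : y ∈ P'.support := P'.end_mem_support
  have hsupC : ∀ a : V, a ∈ C.support ↔ a ∈ P.support ∨ a ∈ P'.support := by
    intro a
    rw [hC, SimpleGraph.Walk.mem_support_append_iff, SimpleGraph.Walk.support_reverse,
      List.mem_reverse]
  -- edges of P and P' are disjoint
  have hedisj : ∀ e, e ∈ P.edges → e ∈ P'.edges → False := by
    intro e he he'
    induction e using Sym2.ind with
    | _ u w =>
      have hu : u ∈ P.support := SimpleGraph.Walk.fst_mem_support_of_mem_edges P he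
      have hw : w ∈ P.support := SimpleGraph.Walk.snd_mem_support_of_mem_edges P he
      have hu' : u ∈ P'.support := SimpleGraph.Walk.fst_mem_support_of_mem_edges P' he'
      have hw' : w ∈ P'.support := SimpleGraph.Walk.snd_mem_support_of_mem_edges P' he'
      have hadj : G.Adj u w := P.edges_subset_edgeSet he
      have h1 := hmemboth u hu hu'
      have h2 := hmemboth w hw hw'
      rcases h1 with rfl | rfl <;> rcases h2 with rfl | rfl
      · exact hadj.ne rfl
      · exact hnadj hadj
      · exact hnadj hadj.symm
      · exact hadj.ne rfl
  -- C is a trail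
  have htrail : C.IsTrail := by
    constructor
    rw [hC, SimpleGraph.Walk.edges_append, SimpleGraph.Walk.edges_reverse]
    refine List.Nodup.append hP.1.1.edges_nodup (List.nodup_reverse.mpr hP'.1.1.edges_nodup) ?_
    intro e he he'
    exact hedisj e he (List.mem_reverse.mp he')
  have hCne : C ≠ SimpleGraph.Walk.nil := by
    intro h
    have h2 := congrArg SimpleGraph.Walk.length h
    rw [hC, SimpleGraph.Walk.length_append] at h2
    simp only [SimpleGraph.Walk.length_nil] at h2
    exact hPlen (Nat.eq_zero_of_add_eq_zero_right h2)
  -- support tail nodup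
  have hP'rev : P'.reverse.support.Nodup := by
    rw [SimpleGraph.Walk.support_reverse, List.nodup_reverse]
    exact hP'.1.support_nodup
  have hxnt : x ∉ P.support.tail := by
    have := hP.1.support_nodup
    rw [P.support_eq_cons] at this
    exact (List.nodup_cons.mp this).1
  have hynt' : y ∉ P'.reverse.support.tail := by
    have := hP'rev
    rw [P'.reverse.support_eq_cons] at this
    exact (List.nodup_cons.mp this).1
  have hstail : C.support.tail = P.support.tail ++ P'.reverse.support.tail := by
    rw [hC, SimpleGraph.Walk.support_append, P.support_eq_cons]
    rfl
  have hsupnd : C.support.tail.Nodup := by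
    rw [hstail]
    refine List.Nodup.append ((P.support_eq_cons ▸ hP.1.support_nodup).of_cons)
      ((P'.reverse.support_eq_cons ▸ hP'rev).of_cons) ?_
    intro a ha ha'
    have haP : a ∈ P.support := by rw [P.support_eq_cons]; exact List.mem_cons_of_mem _ ha
    have haP' : a ∈ P'.support := by
      rw [← List.mem_reverse, ← SimpleGraph.Walk.support_reverse,
        P'.reverse.support_eq_cons]
      exact List.mem_cons_of_mem _ ha'
    rcases hmemboth a haP haP' with rfl | rfl
    · exact hxnt ha
    · exact hynt' ha'
  have hcycle : C.IsCycle := ⟨⟨htrail, hCne⟩, hsupnd⟩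
  -- C is induced
  have hind : IsInducedCycle G C := by
    refine ⟨hcycle, ?_⟩
    intro u w hu hw hadj
    rw [hsupC] at hu hw
    have hedge : s(u, w) ∈ P.edges ∨ s(u, w) ∈ P'.edges → s(u, w) ∈ C.edges := by
      intro h
      rw [hC, SimpleGraph.Walk.edges_append, SimpleGraph.Walk.edges_reverse, List.mem_append,
        List.mem_reverse]
      exact h
    by_cases huP : u ∈ P.support
    · by_cases hwP : w ∈ P.support
      · exact hedge (Or.inl (hP.2 u w huP hwP hadj))
      · have hwP' : w ∈ P'.support := hw.resolve_left hwP
        have hwint : InternalVert G P' w := by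
          refine ⟨hwP', ?_, ?_⟩ <;> rintro rfl <;> exact hwP (by assumption)
        by_cases huP' : u ∈ P'.support
        · exact hedge (Or.inr (hP'.2 u w huP' hwP' hadj))
        · have huint : InternalVert G P u := by
            refine ⟨huP, ?_, ?_⟩ <;> rintro rfl <;> exact huP' (by assumption)
          exact absurd hadj (hnoadj u w huint hwint)
    · have huP' : u ∈ P'.support := hu.resolve_left huP
      by_cases hwP' : w ∈ P'.support
      · exact hedge (Or.inr (hP'.2 u w huP' hwP' hadj))
      · have hwP : w ∈ P.support := hw.resolve_right hwP'
        have huint : InternalVert G P' u := by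
          refine ⟨huP', ?_, ?_⟩ <;> rintro rfl <;> exact huP (by assumption)
        have hwint : InternalVert G P w := by
          refine ⟨hwP, ?_, ?_⟩ <;> rintro rfl <;> exact hwP' (by assumption)
        exact absurd hadj.symm (hnoadj w u hwint huint)
  have := hch C hind
  rwa [hC, SimpleGraph.Walk.length_append, SimpleGraph.Walk.length_reverse] at this
end
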